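/- arXiv:2510.26211 — 4 statements merged into one kernel-verified Lean document; each statement's English description precedes it below -/
import Mathlib

section
/- Let n ≥ 3 and e ∈ [0,1). For the regular n-gon, set δ = 1 + z/λ, where z = Σ_{j=1}^{n−1} (1 − cos 2θⱼ)/(2 d_{nj}³) and λ = (1/4) Σ_{j=1}^{n−1} csc(πj/n). Let η : [0,2π] → M₄(ℝ) solve η′(θ) = J₄ 𝓑₁(θ) η(θ), η(0) = I₄, where J₄ = [[0,−I₂],[I₂,0]] and 𝓑₁(θ) = [[I₂, −J₂],[J₂, I₂ − δ I₂/(1 + e cos θ)]]. Then η(2π) is hyperbolic, i.e. has no eigenvalue of modulus 1. (This is the subsystem of the linearized regular n-gon elliptic relative equilibrium corresponding to l = 1, and it implies that the regular n-gon elliptic relative equilibrium is spectrally unstable for every n ≥ 3 and every e ∈ [0,1).) -/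
open Real Matrix

noncomputable section

/-- A real square matrix is hyperbolic if it has no eigenvalue of modulus `1`. -/
def IsHyperbolicMat {m : Type*} [Fintype m] [DecidableEq m] (M : Matrix m m ℝ) : Prop :=
  ∀ z : ℂ, z ∈ spectrum ℂ (M.map (Complex.ofReal : ℝ → ℂ)) → ‖z‖ ≠ 1

/-- `d_{nj} = 2 sin(πj/n)`. -/
def dnj (n j : ℕ) : ℝ := 2 * Real.sin (π * j / n)

/-- `z = ∑_{j=1}^{n-1} (1 - cos 2θⱼ)/(2 d_{nj}³)`, `θⱼ = 2πj/n`. -/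
def zval (n : ℕ) : ℝ :=
  ∑ j ∈ Finset.Icc 1 (n-1), (1 - Real.cos (2 * (2 * π * j / n))) / (2 * (dnj n j)^3)

/-- `λ = (1/4) ∑_{j=1}^{n-1} csc(πj/n)`. -/
def lamNgon (n : ℕ) : ℝ := (1/4) * ∑ j ∈ Finset.Icc 1 (n-1), 1 / Real.sin (π * j / n)

/-- `J₄ = [[0,-I₂],[I₂,0]]`. -/
def J4 : Matrix (Fin 2 ⊕ Fin 2) (Fin 2 ⊕ Fin 2) ℝ := Matrix.fromBlocks 0 (-1) 1 0

/-- The coefficient matrix `𝓑₁(θ) = [[I₂,-J₂],[J₂, I₂ - δI₂/(1+e cos θ)]]`. -/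
def B1mat (δ e θ : ℝ) : Matrix (Fin 2 ⊕ Fin 2) (Fin 2 ⊕ Fin 2) ℝ :=
  Matrix.fromBlocks 1 (-(!![0, -1; 1, 0] : Matrix (Fin 2) (Fin 2) ℝ))
    (!![0, -1; 1, 0] : Matrix (Fin 2) (Fin 2) ℝ)
    (1 - (δ / (1 + e * Real.cos θ)) • (1 : Matrix (Fin 2) (Fin 2) ℝ))

lemma Amat_eq (δ e θ : ℝ) :
    J4 * B1mat δ e θ =
    Matrix.fromBlocks !![0, 1; -1, 0]
      ((δ / (1 + e * Real.cos θ)) • (1 : Matrix (Fin 2) (Fin 2) ℝ) - 1) 1 !![0, 1; -1, 0] := by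
  unfold J4 B1mat
  rw [Matrix.fromBlocks_multiply]
  ext i j
  rcases i with i | i <;> rcases j with j | j <;>
    fin_cases i <;> fin_cases j <;>
      simp [Matrix.mul_apply, Fin.sum_univ_two, Matrix.one_apply, Matrix.smul_apply]

def xfun (η : ℝ → Matrix (Fin 2 ⊕ Fin 2) (Fin 2 ⊕ Fin 2) ℝ)
    (v : (Fin 2 ⊕ Fin 2) → ℂ) : ℝ → (Fin 2 ⊕ Fin 2) → ℂ :=
  fun t k => ∑ j, ((η t k j : ℝ) : ℂ) * v j

lemma xfun_deriv (η : ℝ → Matrix (Fin 2 ⊕ Fin 2) (Fin 2 ⊕ Fin 2) ℝ)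
    (v : (Fin 2 ⊕ Fin 2) → ℂ) (δ e θ : ℝ)
    (hd : ∀ i j, HasDerivAt (fun t => η t i j) ((J4 * B1mat δ e θ * η θ) i j) θ) (k) :
    HasDerivAt (fun t => xfun η v t k)
      (∑ m, (((J4 * B1mat δ e θ) k m : ℝ) : ℂ) * xfun η v θ m) θ := by
  have h1 : HasDerivAt (fun t => xfun η v t k)
      (∑ j, (((J4 * B1mat δ e θ * η θ) k j : ℝ) : ℂ) * v j) θ := by
    unfold xfun
    exact HasDerivAt.fun_sum (fun j _ => ((hd k j).ofReal_comp).mul_const (v j))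
  convert h1 using 1
  unfold xfun
  calc ∑ m, (((J4 * B1mat δ e θ) k m : ℝ) : ℂ) * ∑ j, ((η θ m j : ℝ) : ℂ) * v j
      = ∑ m, ∑ j, (((J4 * B1mat δ e θ) k m : ℝ) : ℂ) * (((η θ m j : ℝ) : ℂ) * v j) := by
        simp only [Finset.mul_sum]
    _ = ∑ j, ∑ m, (((J4 * B1mat δ e θ) k m : ℝ) : ℂ) * (((η θ m j : ℝ) : ℂ) * v j) :=
        Finset.sum_comm
    _ = ∑ j, (((J4 * B1mat δ e θ * η θ) k j : ℝ) : ℂ) * v j := by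
        refine Finset.sum_congr rfl fun j _ => ?_
        rw [Matrix.mul_apply]
        push_cast
        rw [Finset.sum_mul]
        simp [mul_assoc]

lemma xP_deriv (η : ℝ → Matrix (Fin 2 ⊕ Fin 2) (Fin 2 ⊕ Fin 2) ℝ)
    (v : (Fin 2 ⊕ Fin 2) → ℂ) (δ e θ : ℝ)
    (hd : ∀ i j, HasDerivAt (fun t => η t i j) ((J4 * B1mat δ e θ * η θ) i j) θ) :
    HasDerivAt (fun t => xfun η v t (Sum.inl 0))
      (xfun η v θ (Sum.inl 1)
        + (((δ/(1+e*Real.cos θ) : ℝ) : ℂ) - 1) * xfun η v θ (Sum.inr 0)) θ := by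
  have h := xfun_deriv η v δ e θ hd (Sum.inl 0)
  rw [Amat_eq] at h
  convert h using 1
  rw [Fintype.sum_sum_type]
  simp [Fin.sum_univ_two, Matrix.smul_apply, Matrix.sub_apply, Matrix.one_apply]

lemma xQ_deriv (η : ℝ → Matrix (Fin 2 ⊕ Fin 2) (Fin 2 ⊕ Fin 2) ℝ)
    (v : (Fin 2 ⊕ Fin 2) → ℂ) (δ e θ : ℝ)
    (hd : ∀ i j, HasDerivAt (fun t => η t i j) ((J4 * B1mat δ e θ * η θ) i j) θ) :
    HasDerivAt (fun t => xfun η v t (Sum.inl 1))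
      (-xfun η v θ (Sum.inl 0)
        + (((δ/(1+e*Real.cos θ) : ℝ) : ℂ) - 1) * xfun η v θ (Sum.inr 1)) θ := by
  have h := xfun_deriv η v δ e θ hd (Sum.inl 1)
  rw [Amat_eq] at h
  convert h using 1
  rw [Fintype.sum_sum_type]
  simp [Fin.sum_univ_two, Matrix.smul_apply, Matrix.sub_apply, Matrix.one_apply]

lemma xR_deriv (η : ℝ → Matrix (Fin 2 ⊕ Fin 2) (Fin 2 ⊕ Fin 2) ℝ)
    (v : (Fin 2 ⊕ Fin 2) → ℂ) (δ e θ : ℝ)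
    (hd : ∀ i j, HasDerivAt (fun t => η t i j) ((J4 * B1mat δ e θ * η θ) i j) θ) :
    HasDerivAt (fun t => xfun η v t (Sum.inr 0))
      (xfun η v θ (Sum.inl 0) + xfun η v θ (Sum.inr 1)) θ := by
  have h := xfun_deriv η v δ e θ hd (Sum.inr 0)
  rw [Amat_eq] at h
  convert h using 1
  rw [Fintype.sum_sum_type]
  simp [Fin.sum_univ_two, Matrix.smul_apply, Matrix.sub_apply, Matrix.one_apply]

lemma xS_deriv (η : ℝ → Matrix (Fin 2 ⊕ Fin 2) (Fin 2 ⊕ Fin 2) ℝ)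
    (v : (Fin 2 ⊕ Fin 2) → ℂ) (δ e θ : ℝ)
    (hd : ∀ i j, HasDerivAt (fun t => η t i j) ((J4 * B1mat δ e θ * η θ) i j) θ) :
    HasDerivAt (fun t => xfun η v t (Sum.inr 1))
      (xfun η v θ (Sum.inl 1) - xfun η v θ (Sum.inr 0)) θ := by
  have h := xfun_deriv η v δ e θ hd (Sum.inr 1)
  rw [Amat_eq] at h
  convert h using 1
  rw [Fintype.sum_sum_type]
  simp [Fin.sum_univ_two, Matrix.smul_apply, Matrix.sub_apply, Matrix.one_apply]
  ring

open Complex in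
def yfun (η : ℝ → Matrix (Fin 2 ⊕ Fin 2) (Fin 2 ⊕ Fin 2) ℝ) (v : (Fin 2 ⊕ Fin 2) → ℂ) : ℝ → ℂ :=
  fun t => Complex.exp ((t:ℂ) * Complex.I) *
    ((xfun η v t (Sum.inr 0) + Complex.I * xfun η v t (Sum.inr 1))/2)

def Yfun (η : ℝ → Matrix (Fin 2 ⊕ Fin 2) (Fin 2 ⊕ Fin 2) ℝ) (v : (Fin 2 ⊕ Fin 2) → ℂ) : ℝ → ℂ :=
  fun t => Complex.exp ((t:ℂ) * Complex.I) *
    ((xfun η v t (Sum.inl 0) + Complex.I * xfun η v t (Sum.inl 1))/2)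

def y2fun (η : ℝ → Matrix (Fin 2 ⊕ Fin 2) (Fin 2 ⊕ Fin 2) ℝ) (v : (Fin 2 ⊕ Fin 2) → ℂ) : ℝ → ℂ :=
  fun t => Complex.exp (-((t:ℂ) * Complex.I)) *
    ((xfun η v t (Sum.inr 0) - Complex.I * xfun η v t (Sum.inr 1))/2)

def Y2fun (η : ℝ → Matrix (Fin 2 ⊕ Fin 2) (Fin 2 ⊕ Fin 2) ℝ) (v : (Fin 2 ⊕ Fin 2) → ℂ) : ℝ → ℂ :=
  fun t => Complex.exp (-((t:ℂ) * Complex.I)) *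
    ((xfun η v t (Sum.inl 0) - Complex.I * xfun η v t (Sum.inl 1))/2)

lemma expI_deriv (t : ℝ) :
    HasDerivAt (fun s : ℝ => Complex.exp ((s:ℂ) * Complex.I))
      (Complex.exp ((t:ℂ) * Complex.I) * Complex.I) t := by
  have h0 : HasDerivAt (fun s : ℝ => (s:ℂ) * Complex.I) Complex.I t := by
    simpa using ((hasDerivAt_id t).ofReal_comp.mul_const Complex.I)
  simpa using h0.cexp

lemma expI_deriv' (t : ℝ) :
    HasDerivAt (fun s : ℝ => Complex.exp (-((s:ℂ) * Complex.I)))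
      (Complex.exp (-((t:ℂ) * Complex.I)) * (-Complex.I)) t := by
  have h0 : HasDerivAt (fun s : ℝ => -((s:ℂ) * Complex.I)) (-Complex.I) t := by
    simpa using ((hasDerivAt_id t).ofReal_comp.mul_const Complex.I).fun_neg
  simpa using h0.cexp

lemma yfun_deriv (η : ℝ → Matrix (Fin 2 ⊕ Fin 2) (Fin 2 ⊕ Fin 2) ℝ)
    (v : (Fin 2 ⊕ Fin 2) → ℂ) (δ e θ : ℝ)
    (hd : ∀ i j, HasDerivAt (fun t => η t i j) ((J4 * B1mat δ e θ * η θ) i j) θ) :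
    HasDerivAt (yfun η v) (Yfun η v θ) θ := by
  have hB := ((xR_deriv η v δ e θ hd).add ((xS_deriv η v δ e θ hd).const_mul Complex.I)).div_const 2
  have h := (expI_deriv θ).mul hB
  refine h.congr_deriv ?_; symm
  unfold Yfun; simp only [Pi.add_apply, Pi.sub_apply]
  linear_combination (-(Complex.exp ((θ:ℂ) * Complex.I) * xfun η v θ (Sum.inr 1))/2) * Complex.I_sq

lemma Yfun_deriv (η : ℝ → Matrix (Fin 2 ⊕ Fin 2) (Fin 2 ⊕ Fin 2) ℝ)
    (v : (Fin 2 ⊕ Fin 2) → ℂ) (δ e θ : ℝ)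
    (hd : ∀ i j, HasDerivAt (fun t => η t i j) ((J4 * B1mat δ e θ * η θ) i j) θ) :
    HasDerivAt (Yfun η v) ((((δ/(1+e*Real.cos θ) : ℝ) : ℂ) - 1) * yfun η v θ) θ := by
  have hB := ((xP_deriv η v δ e θ hd).add ((xQ_deriv η v δ e θ hd).const_mul Complex.I)).div_const 2
  have h := (expI_deriv θ).mul hB
  refine h.congr_deriv ?_; symm
  unfold yfun; simp only [Pi.add_apply, Pi.sub_apply]
  linear_combination (-(Complex.exp ((θ:ℂ) * Complex.I) * xfun η v θ (Sum.inl 1))/2) * Complex.I_sq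

lemma y2fun_deriv (η : ℝ → Matrix (Fin 2 ⊕ Fin 2) (Fin 2 ⊕ Fin 2) ℝ)
    (v : (Fin 2 ⊕ Fin 2) → ℂ) (δ e θ : ℝ)
    (hd : ∀ i j, HasDerivAt (fun t => η t i j) ((J4 * B1mat δ e θ * η θ) i j) θ) :
    HasDerivAt (y2fun η v) (Y2fun η v θ) θ := by
  have hB := ((xR_deriv η v δ e θ hd).sub ((xS_deriv η v δ e θ hd).const_mul Complex.I)).div_const 2
  have h := (expI_deriv' θ).mul hB
  refine h.congr_deriv ?_; symm
  unfold Y2fun; simp only [Pi.add_apply, Pi.sub_apply]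
  linear_combination (-(Complex.exp (-((θ:ℂ) * Complex.I)) * xfun η v θ (Sum.inr 1))/2) * Complex.I_sq

lemma Y2fun_deriv (η : ℝ → Matrix (Fin 2 ⊕ Fin 2) (Fin 2 ⊕ Fin 2) ℝ)
    (v : (Fin 2 ⊕ Fin 2) → ℂ) (δ e θ : ℝ)
    (hd : ∀ i j, HasDerivAt (fun t => η t i j) ((J4 * B1mat δ e θ * η θ) i j) θ) :
    HasDerivAt (Y2fun η v) ((((δ/(1+e*Real.cos θ) : ℝ) : ℂ) - 1) * y2fun η v θ) θ := by
  have hB := ((xP_deriv η v δ e θ hd).sub ((xQ_deriv η v δ e θ hd).const_mul Complex.I)).div_const 2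
  have h := (expI_deriv' θ).mul hB
  refine h.congr_deriv ?_; symm
  unfold y2fun; simp only [Pi.add_apply, Pi.sub_apply]
  linear_combination (-(Complex.exp (-((θ:ℂ) * Complex.I)) * xfun η v θ (Sum.inl 1))/2) * Complex.I_sq

def phif (δ e : ℝ) : ℝ → ℝ := fun t => (δ-2)*e*Real.sin t/(1+e*Real.cos t)

def phid (δ e : ℝ) : ℝ → ℝ := fun t =>
  ((δ-2)*e*Real.cos t*(1+e*Real.cos t) - (δ-2)*e*Real.sin t*(e*(-Real.sin t)))/(1+e*Real.cos t)^2

lemma u_pos (e t : ℝ) (he0 : 0 ≤ e) (he1 : e < 1) : 0 < 1 + e * Real.cos t := by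
  nlinarith [Real.neg_one_le_cos t, Real.cos_le_one t]

lemma phif_deriv (δ e : ℝ) (he0 : 0 ≤ e) (he1 : e < 1) (t : ℝ) :
    HasDerivAt (phif δ e) (phid δ e t) t := by
  have h1 : HasDerivAt (fun s => (δ-2)*e*Real.sin s) ((δ-2)*e*Real.cos t) t := by
    simpa [mul_comm] using (Real.hasDerivAt_sin t).const_mul ((δ-2)*e)
  have h2 : HasDerivAt (fun s => 1+e*Real.cos s) (e*(-Real.sin t)) t := by
    simpa using ((Real.hasDerivAt_cos t).const_mul e).const_add 1
  exact h1.div h2 (ne_of_gt (u_pos e t he0 he1))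

def Gfun (η : ℝ → Matrix (Fin 2 ⊕ Fin 2) (Fin 2 ⊕ Fin 2) ℝ) (v : (Fin 2 ⊕ Fin 2) → ℂ)
    (δ e : ℝ) : ℝ → ℝ := fun t =>
  (star (yfun η v t) * Yfun η v t + star (y2fun η v t) * Y2fun η v t).re
    - phif δ e t * ((star (yfun η v t) * yfun η v t + star (y2fun η v t) * y2fun η v t).re)

def Dfun (η : ℝ → Matrix (Fin 2 ⊕ Fin 2) (Fin 2 ⊕ Fin 2) ℝ) (v : (Fin 2 ⊕ Fin 2) → ℂ)
    (δ e : ℝ) : ℝ → ℝ := fun t =>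
  ((star (Yfun η v t) * Yfun η v t
      + star (yfun η v t) * ((((δ/(1+e*Real.cos t) : ℝ) : ℂ) - 1) * yfun η v t))
    + (star (Y2fun η v t) * Y2fun η v t
      + star (y2fun η v t) * ((((δ/(1+e*Real.cos t) : ℝ) : ℂ) - 1) * y2fun η v t))).re
  - (phid δ e t * ((star (yfun η v t) * yfun η v t + star (y2fun η v t) * y2fun η v t).re)
     + phif δ e t * (((star (Yfun η v t) * yfun η v t + star (yfun η v t) * Yfun η v t)
        + (star (Y2fun η v t) * y2fun η v t + star (y2fun η v t) * Y2fun η v t)).re))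

lemma hre {f : ℝ → ℂ} {f' : ℂ} {t : ℝ} (h : HasDerivAt f f' t) :
    HasDerivAt (fun s => (f s).re) f'.re t := by
  exact Complex.reCLM.hasFDerivAt.comp_hasDerivAt t h

lemma Gfun_deriv (η : ℝ → Matrix (Fin 2 ⊕ Fin 2) (Fin 2 ⊕ Fin 2) ℝ)
    (v : (Fin 2 ⊕ Fin 2) → ℂ) (δ e θ : ℝ) (he0 : 0 ≤ e) (he1 : e < 1)
    (hd : ∀ i j, HasDerivAt (fun t => η t i j) ((J4 * B1mat δ e θ * η θ) i j) θ) :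
    HasDerivAt (Gfun η v δ e) (Dfun η v δ e θ) θ := by
  have hy := yfun_deriv η v δ e θ hd
  have hY := Yfun_deriv η v δ e θ hd
  have hy2 := y2fun_deriv η v δ e θ hd
  have hY2 := Y2fun_deriv η v δ e θ hd
  have h1 : HasDerivAt
      (fun t => (star (yfun η v t) * Yfun η v t + star (y2fun η v t) * Y2fun η v t).re)
      ((star (Yfun η v θ) * Yfun η v θ
        + star (yfun η v θ) * ((((δ/(1+e*Real.cos θ) : ℝ) : ℂ) - 1) * yfun η v θ))
       + (star (Y2fun η v θ) * Y2fun η v θ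
        + star (y2fun η v θ) * ((((δ/(1+e*Real.cos θ) : ℝ) : ℂ) - 1) * y2fun η v θ))).re θ :=
    hre (((hy.star.mul hY)).add ((hy2.star.mul hY2)))
  have h2 : HasDerivAt
      (fun t => (star (yfun η v t) * yfun η v t + star (y2fun η v t) * y2fun η v t).re)
      (((star (Yfun η v θ) * yfun η v θ + star (yfun η v θ) * Yfun η v θ)
        + (star (Y2fun η v θ) * y2fun η v θ + star (y2fun η v θ) * Y2fun η v θ))).re θ :=
    hre (((hy.star.mul hy)).add ((hy2.star.mul hy2)))
  exact h1.sub ((phif_deriv δ e he0 he1 θ).mul h2)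
/-- Core real inequality for the Lyapunov derivative. -/
lemma core_ineq (δ e s c u : ℝ) (hu : u = 1 + e*c) (hsc : s^2 + c^2 = 1)
    (hδ1 : 1 < δ) (hδ3 : δ ≤ 3) (he0 : 0 ≤ e) (he1 : e < 1)
    (ar ai br bi cr ci dr di : ℝ) :
    ((δ-1)*(1-e^2)/u^2) * (ar^2+ai^2+cr^2+ci^2) ≤
      (br^2+bi^2+dr^2+di^2) + (δ/u - 1)*(ar^2+ai^2+cr^2+ci^2)
      - (((δ-2)*e*c*u - (δ-2)*e*s*(e*(-s)))/u^2 * (ar^2+ai^2+cr^2+ci^2)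
         + ((δ-2)*e*s/u) * (2*(br*ar+bi*ai+dr*cr+di*ci))) := by
  have hc1 : c^2 ≤ 1 := by nlinarith [sq_nonneg s]
  have hcm : -1 ≤ c := by nlinarith
  have hu0 : 0 < u := by rw [hu]; nlinarith
  have h31 : 0 ≤ (δ-1)*(3-δ) := mul_nonneg (by linarith) (by linarith)
  have keyeq : (δ-1)*(1-e^2) + ((δ-2)*e*s)^2 + ((δ-2)*e*c*u - (δ-2)*e*s*(e*(-s)))
      + (δ-1)*(3-δ)*e^2*s^2 = (δ-u)*u := by
    subst hu
    linear_combination ((δ-1)*e^2) * hsc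
  have hprod : 0 ≤ (δ-1)*(3-δ)*e^2*s^2 := by
    nlinarith [mul_nonneg h31 (mul_nonneg (sq_nonneg e) (sq_nonneg s))]
  have key : (δ-1)*(1-e^2) + ((δ-2)*e*s)^2 + ((δ-2)*e*c*u - (δ-2)*e*s*(e*(-s)))
      ≤ (δ-u)*u := by linarith
  have hq : (δ-1)*(1-e^2)/u^2 + ((δ-2)*e*s/u)^2
      ≤ (δ/u - 1) - ((δ-2)*e*c*u - (δ-2)*e*s*(e*(-s)))/u^2 := by
    have e1 : (δ-1)*(1-e^2)/u^2 + ((δ-2)*e*s/u)^2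
        = ((δ-1)*(1-e^2) + ((δ-2)*e*s)^2)/u^2 := by
      field_simp
    have e2 : (δ/u - 1) - ((δ-2)*e*c*u - (δ-2)*e*s*(e*(-s)))/u^2
        = ((δ-u)*u - ((δ-2)*e*c*u - (δ-2)*e*s*(e*(-s))))/u^2 := by
      field_simp
    rw [e1, e2]
    apply (div_le_div_iff_of_pos_right (by positivity)).mpr
    linarith
  nlinarith [sq_nonneg (br - ((δ-2)*e*s/u)*ar), sq_nonneg (bi - ((δ-2)*e*s/u)*ai),
    sq_nonneg (dr - ((δ-2)*e*s/u)*cr), sq_nonneg (di - ((δ-2)*e*s/u)*ci),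
    mul_le_mul_of_nonneg_right hq (show (0:ℝ) ≤ ar^2+ai^2+cr^2+ci^2 by positivity)]

lemma Dfun_lower (η : ℝ → Matrix (Fin 2 ⊕ Fin 2) (Fin 2 ⊕ Fin 2) ℝ)
    (v : (Fin 2 ⊕ Fin 2) → ℂ) (δ e t : ℝ)
    (hδ1 : 1 < δ) (hδ3 : δ ≤ 3) (he0 : 0 ≤ e) (he1 : e < 1) :
    ((δ-1)*(1-e^2)/(1+e*Real.cos t)^2)
      * (Complex.normSq (yfun η v t) + Complex.normSq (y2fun η v t)) ≤ Dfun η v δ e t := by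
  have hcore := core_ineq δ e (Real.sin t) (Real.cos t) (1+e*Real.cos t) rfl
    (Real.sin_sq_add_cos_sq t) hδ1 hδ3 he0 he1
    (yfun η v t).re (yfun η v t).im (Yfun η v t).re (Yfun η v t).im
    (y2fun η v t).re (y2fun η v t).im (Y2fun η v t).re (Y2fun η v t).im
  have e1 : Dfun η v δ e t =
      ((Yfun η v t).re^2+(Yfun η v t).im^2+(Y2fun η v t).re^2+(Y2fun η v t).im^2)
      + (δ/(1+e*Real.cos t) - 1)
        * ((yfun η v t).re^2+(yfun η v t).im^2+(y2fun η v t).re^2+(y2fun η v t).im^2)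
      - (((δ-2)*e*Real.cos t*(1+e*Real.cos t)
            - (δ-2)*e*Real.sin t*(e*(-Real.sin t)))/(1+e*Real.cos t)^2
          * ((yfun η v t).re^2+(yfun η v t).im^2+(y2fun η v t).re^2+(y2fun η v t).im^2)
         + ((δ-2)*e*Real.sin t/(1+e*Real.cos t))
          * (2*((Yfun η v t).re*(yfun η v t).re+(Yfun η v t).im*(yfun η v t).im
              +(Y2fun η v t).re*(y2fun η v t).re+(Y2fun η v t).im*(y2fun η v t).im))) := by
    unfold Dfun phif phid
    generalize (δ/(1+e*Real.cos t) : ℝ) = κv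
    simp [Complex.mul_re, Complex.mul_im, Complex.add_re, Complex.add_im,
      Complex.sub_re, Complex.sub_im, Complex.ofReal_re, Complex.ofReal_im,
      Complex.one_re, Complex.one_im]
    ring
  have e2 : Complex.normSq (yfun η v t) + Complex.normSq (y2fun η v t)
      = (yfun η v t).re^2+(yfun η v t).im^2+(y2fun η v t).re^2+(y2fun η v t).im^2 := by
    simp [Complex.normSq_apply]; ring
  rw [e1, e2]
  exact hcore

lemma star_mul_self_re (w : ℂ) : (star w * w).re = Complex.normSq w := by
  rw [← starRingEnd_apply, ← Complex.normSq_eq_conj_mul_self, Complex.ofReal_re]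

lemma star_z_mul (z : ℂ) (hz : ‖z‖ = 1) (a b : ℂ) :
    star (z*a) * (z*b) = star a * b := by
  have h1 : Complex.normSq z = 1 := by rw [Complex.normSq_eq_norm_sq, hz]; norm_num
  have h2 : star z * z = 1 := by
    rw [← starRingEnd_apply, ← Complex.normSq_eq_conj_mul_self, h1, Complex.ofReal_one]
  calc star (z*a) * (z*b) = (star z * z) * (star a * b) := by rw [star_mul']; ring
    _ = star a * b := by rw [h2, one_mul]

lemma sin_pos_of_mem (n j : ℕ) (hn : 3 ≤ n) (hj : j ∈ Finset.Icc 1 (n-1)) :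
    0 < Real.sin (π * j / n) := by
  rw [Finset.mem_Icc] at hj
  have hn0 : (0:ℝ) < n := by positivity
  have hj1 : (1:ℝ) ≤ (j:ℝ) := by exact_mod_cast hj.1
  have hjn : (j:ℝ) < n := by
    have : j < n := by omega
    exact_mod_cast this
  apply Real.sin_pos_of_pos_of_lt_pi
  · positivity
  · rw [div_lt_iff₀ hn0]
    nlinarith [Real.pi_pos]

lemma lamNgon_pos (n : ℕ) (hn : 3 ≤ n) : 0 < lamNgon n := by
  unfold lamNgon
  have hne : (Finset.Icc 1 (n-1)).Nonempty := ⟨1, by simp [Finset.mem_Icc]; omega⟩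
  have : 0 < ∑ j ∈ Finset.Icc 1 (n-1), 1 / Real.sin (π * j / n) :=
    Finset.sum_pos (fun j hj => by have := sin_pos_of_mem n j hn hj; positivity) hne
  linarith

lemma zval_pos (n : ℕ) (hn : 3 ≤ n) : 0 < zval n := by
  unfold zval
  have h1 : 1 ∈ Finset.Icc 1 (n-1) := by simp [Finset.mem_Icc]; omega
  refine Finset.sum_pos' (fun j hj => ?_) ⟨1, h1, ?_⟩
  · have hs := sin_pos_of_mem n j hn hj
    have hd : 0 < dnj n j := by unfold dnj; linarith
    have hc : Real.cos (2 * (2 * π * j / n)) ≤ 1 := Real.cos_le_one _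
    have h2 : 0 < 2 * (dnj n j)^3 := by positivity
    apply div_nonneg (by linarith) (by linarith)
  · have hs := sin_pos_of_mem n 1 hn h1
    have hd : 0 < dnj n 1 := by unfold dnj; linarith
    have key : 2 * (2 * π * ((1:ℕ):ℝ) / n) = 2 * (2 * π / n) := by push_cast; ring
    have hsin2 : 0 < Real.sin (2 * π / n) := by
      have hn0 : (0:ℝ) < n := by positivity
      apply Real.sin_pos_of_pos_of_lt_pi
      · positivity
      · rw [div_lt_iff₀ hn0]
        have h3 : (3:ℝ) ≤ n := by exact_mod_cast hn
        nlinarith [Real.pi_pos]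
    have hcos : Real.cos (2 * (2 * π / n)) = 1 - 2 * Real.sin (2*π/n)^2 := by
      rw [Real.cos_two_mul]
      have := Real.sin_sq_add_cos_sq (2*π/n)
      nlinarith
    rw [key, hcos]
    have h2 : 0 < 2 * (dnj n 1)^3 := by positivity
    apply div_pos (by nlinarith) h2

lemma zval_le (n : ℕ) (hn : 3 ≤ n) : zval n ≤ 2 * lamNgon n := by
  unfold zval lamNgon
  have hrw : (2:ℝ) * ((1/4) * ∑ j ∈ Finset.Icc 1 (n-1), 1 / Real.sin (π * j / n))
      = ∑ j ∈ Finset.Icc 1 (n-1), (1/2) * (1 / Real.sin (π * j / n)) := by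
    rw [Finset.mul_sum, Finset.mul_sum]
    exact Finset.sum_congr rfl (fun j _ => by ring)
  rw [hrw]
  apply Finset.sum_le_sum
  intro j hj
  have hs := sin_pos_of_mem n j hn hj
  set A := π * (j:ℝ) / n with hA
  have harg : (2:ℝ) * (2 * π * (j:ℝ) / n) = 2 * (2 * A) := by rw [hA]; ring
  have hnum : 1 - Real.cos (2 * (2 * π * (j:ℝ) / n)) = 2 * Real.sin (2*A)^2 := by
    rw [harg, Real.cos_two_mul]
    nlinarith [Real.sin_sq_add_cos_sq (2*A)]
  have hsin2A : Real.sin (2*A) = 2 * Real.sin A * Real.cos A := Real.sin_two_mul A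
  have hcosle : Real.cos A ^ 2 ≤ 1 := by nlinarith [Real.sin_sq_add_cos_sq A, sq_nonneg (Real.sin A)]
  have hd : dnj n j = 2 * Real.sin A := by unfold dnj; rw [hA]
  rw [hnum, hd, hsin2A]
  have hle : 2 * (2 * Real.sin A * Real.cos A)^2 ≤ 8 * Real.sin A^2 := by nlinarith [sq_nonneg (Real.sin A)]
  calc 2 * (2 * Real.sin A * Real.cos A)^2 / (2 * (2*Real.sin A)^3)
      ≤ (8 * Real.sin A^2) / (2 * (2*Real.sin A)^3) := by
        exact div_le_div_of_nonneg_right hle (by positivity)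
    _ = (1/2) * (1 / Real.sin A) := by field_simp; ring
lemma eigvec_of_spectrum {N : Type*} [Fintype N] [DecidableEq N]
    (M : Matrix N N ℂ) (z : ℂ) (hz : z ∈ spectrum ℂ M) :
    ∃ v : N → ℂ, v ≠ 0 ∧ M.mulVec v = z • v := by
  rw [spectrum.mem_iff] at hz
  have hdet : (algebraMap ℂ (Matrix N N ℂ) z - M).det = 0 := by
    by_contra h
    exact hz ((Matrix.isUnit_iff_isUnit_det _).mpr (isUnit_iff_ne_zero.mpr h))
  obtain ⟨v, hv0, hv⟩ := (Matrix.exists_mulVec_eq_zero_iff).mpr hdet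
  refine ⟨v, hv0, ?_⟩
  have heq : (algebraMap ℂ (Matrix N N ℂ) z - M).mulVec v = z • v - M.mulVec v := by
    rw [Matrix.sub_mulVec, Algebra.algebraMap_eq_smul_one, Matrix.smul_mulVec,
      Matrix.one_mulVec]
  rw [heq] at hv
  exact (sub_eq_zero.mp hv).symm


/-- for `n ≥ 3` and `e ∈ [0,1)`, the monodromy matrix `η(2π)` of the
subsystem `η′(θ) = J₄ 𝓑₁(θ) η(θ)`, `η(0) = I₄`, with `δ = 1 + z/λ`, is hyperbolic;
this subsystem (the `l = 1` part of the linearized regular `n`-gon ERE) being hyperbolic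
implies that the regular `n`-gon elliptic relative equilibrium is spectrally unstable. -/
theorem ngon_l1_subsystem_hyperbolic (n : ℕ) (hn : 3 ≤ n) (e : ℝ)
    (he0 : 0 ≤ e) (he1 : e < 1)
    (η : ℝ → Matrix (Fin 2 ⊕ Fin 2) (Fin 2 ⊕ Fin 2) ℝ)
    (hη0 : η 0 = 1)
    (hη : ∀ θ ∈ Set.Icc (0:ℝ) (2 * π), ∀ i j,
      HasDerivAt (fun t => η t i j)
        ((J4 * B1mat (1 + zval n / lamNgon n) e θ * η θ) i j) θ) :
    IsHyperbolicMat (η (2 * π)) := by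

  intro z hz habs
  have hlam := lamNgon_pos n hn
  have hzv := zval_pos n hn
  have hzl := zval_le n hn
  set δ := 1 + zval n / lamNgon n with hδdef
  have hδ1 : 1 < δ := by rw [hδdef]; have := div_pos hzv hlam; linarith
  have hδ3 : δ ≤ 3 := by
    rw [hδdef]
    have h2 : zval n / lamNgon n ≤ 2 := by rw [div_le_iff₀ hlam]; linarith
    linarith
  obtain ⟨v, hv0, hv⟩ := eigvec_of_spectrum ((η (2*π)).map (Complex.ofReal : ℝ → ℂ)) z hz
  have hπ : 0 < π := Real.pi_pos
  have h2π : (0:ℝ) < 2*π := by linarith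
  have hmem0 : (0:ℝ) ∈ Set.Icc (0:ℝ) (2*π) := ⟨le_refl _, by linarith⟩
  have hmem2π : (2*π) ∈ Set.Icc (0:ℝ) (2*π) := ⟨by linarith, le_refl _⟩
  -- endpoint values of x
  have hx0 : ∀ k, xfun η v 0 k = v k := by
    intro k; unfold xfun; rw [hη0]
    rcases k with k | k <;> fin_cases k <;> simp [Matrix.one_apply]
  have hx2π : ∀ k, xfun η v (2*π) k = z * v k := by
    intro k
    have h1 : xfun η v (2*π) k = ((η (2*π)).map (Complex.ofReal : ℝ → ℂ)).mulVec v k := by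
      unfold xfun; simp [Matrix.mulVec, dotProduct, Matrix.map_apply]
    rw [h1, hv]; simp
  -- derivative of G
  have hG : ∀ θ ∈ Set.Icc (0:ℝ) (2*π), HasDerivAt (Gfun η v δ e) (Dfun η v δ e θ) θ :=
    fun θ hθ => Gfun_deriv η v δ e θ he0 he1 (hη θ hθ)
  have hDnn : ∀ t, 0 ≤ Dfun η v δ e t := by
    intro t
    refine le_trans ?_ (Dfun_lower η v δ e t hδ1 hδ3 he0 he1)
    have h1 : 0 ≤ (δ-1)*(1-e^2)/(1+e*Real.cos t)^2 := by
      apply div_nonneg (mul_nonneg (by linarith) (by nlinarith)) (by positivity)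
    exact mul_nonneg h1 (add_nonneg (Complex.normSq_nonneg _) (Complex.normSq_nonneg _))
  -- endpoint values of the scalar functions
  have hexp0 : Complex.exp ((0:ℝ) * Complex.I) = 1 := by norm_num
  have hexp0' : Complex.exp (-((0:ℝ) * Complex.I)) = 1 := by norm_num
  have hexp2π : Complex.exp (((2*π : ℝ):ℂ) * Complex.I) = 1 := by
    push_cast
    exact Complex.exp_two_pi_mul_I
  have hexp2π' : Complex.exp (-(((2*π : ℝ):ℂ) * Complex.I)) = 1 := by
    rw [Complex.exp_neg, hexp2π, inv_one]
  have hy0v : yfun η v 0 = (v (Sum.inr 0) + Complex.I * v (Sum.inr 1))/2 := by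
    unfold yfun; rw [hx0, hx0]; simp
  have hY0v : Yfun η v 0 = (v (Sum.inl 0) + Complex.I * v (Sum.inl 1))/2 := by
    unfold Yfun; rw [hx0, hx0]; simp
  have hy20v : y2fun η v 0 = (v (Sum.inr 0) - Complex.I * v (Sum.inr 1))/2 := by
    unfold y2fun; rw [hx0, hx0]; simp
  have hY20v : Y2fun η v 0 = (v (Sum.inl 0) - Complex.I * v (Sum.inl 1))/2 := by
    unfold Y2fun; rw [hx0, hx0]; simp
  have hy2πv : yfun η v (2*π) = z * ((v (Sum.inr 0) + Complex.I * v (Sum.inr 1))/2) := by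
    unfold yfun; rw [hx2π, hx2π, hexp2π]; ring
  have hY2πv : Yfun η v (2*π) = z * ((v (Sum.inl 0) + Complex.I * v (Sum.inl 1))/2) := by
    unfold Yfun; rw [hx2π, hx2π, hexp2π]; ring
  have hy22πv : y2fun η v (2*π) = z * ((v (Sum.inr 0) - Complex.I * v (Sum.inr 1))/2) := by
    unfold y2fun; rw [hx2π, hx2π, hexp2π']; ring
  have hY22πv : Y2fun η v (2*π) = z * ((v (Sum.inl 0) - Complex.I * v (Sum.inl 1))/2) := by
    unfold Y2fun; rw [hx2π, hx2π, hexp2π']; ring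
  have hφ2π : phif δ e (2*π) = 0 := by unfold phif; rw [Real.sin_two_pi]; ring
  have hφ0 : phif δ e 0 = 0 := by unfold phif; rw [Real.sin_zero]; ring
  have hG2π : Gfun η v δ e (2*π) = Gfun η v δ e 0 := by
    unfold Gfun
    rw [hy2πv, hY2πv, hy22πv, hY22πv, hy0v, hY0v, hy20v, hY20v, hφ2π, hφ0,
      star_z_mul z habs, star_z_mul z habs]
    ring
  -- monotone, hence constant
  have hcont : ContinuousOn (Gfun η v δ e) (Set.Icc 0 (2*π)) :=
    fun t ht => ((hG t ht).continuousAt).continuousWithinAt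
  have hmono : MonotoneOn (Gfun η v δ e) (Set.Icc 0 (2*π)) := by
    apply monotoneOn_of_deriv_nonneg (convex_Icc _ _) hcont
    · rw [interior_Icc]
      exact fun t ht => ((hG t (Set.Ioo_subset_Icc_self ht)).differentiableAt).differentiableWithinAt
    · rw [interior_Icc]
      intro t ht
      rw [(hG t (Set.Ioo_subset_Icc_self ht)).deriv]
      exact hDnn t
  have hconst : ∀ t ∈ Set.Icc (0:ℝ) (2*π), Gfun η v δ e t = Gfun η v δ e 0 := by
    intro t ht
    have h1 : Gfun η v δ e 0 ≤ Gfun η v δ e t := hmono hmem0 ht ht.1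
    have h2 : Gfun η v δ e t ≤ Gfun η v δ e (2*π) := hmono ht hmem2π ht.2
    rw [hG2π] at h2
    linarith
  have hD0 : ∀ t ∈ Set.Ioo (0:ℝ) (2*π), Dfun η v δ e t = 0 := by
    intro t ht
    have heq : Gfun η v δ e =ᶠ[nhds t] fun _ => Gfun η v δ e 0 := by
      filter_upwards [Ioo_mem_nhds ht.1 ht.2] with s hs
      exact hconst s (Set.Ioo_subset_Icc_self hs)
    have h2 : HasDerivAt (fun _ : ℝ => Gfun η v δ e 0) (Dfun η v δ e t) t :=
      (hG t (Set.Ioo_subset_Icc_self ht)).congr_of_eventuallyEq heq.symm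
    have h3 := (hasDerivAt_const t (Gfun η v δ e 0)).unique h2
    linarith [h3]
  -- all components vanish on the open interval
  have hzero : ∀ t ∈ Set.Ioo (0:ℝ) (2*π), ∀ k, xfun η v t k = 0 := by
    intro t ht
    have hd0 := hD0 t ht
    have hl := Dfun_lower η v δ e t hδ1 hδ3 he0 he1
    rw [hd0] at hl
    have hupos := u_pos e t he0 he1
    have hcoef : 0 < (δ-1)*(1-e^2)/(1+e*Real.cos t)^2 := by
      apply div_pos (mul_pos (by linarith) (by nlinarith)) (by positivity)
    have hsum : Complex.normSq (yfun η v t) + Complex.normSq (y2fun η v t) ≤ 0 := by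
      nlinarith [Complex.normSq_nonneg (yfun η v t), Complex.normSq_nonneg (y2fun η v t)]
    have hy0' : yfun η v t = 0 :=
      Complex.normSq_eq_zero.mp
        (le_antisymm (by linarith [Complex.normSq_nonneg (y2fun η v t)]) (Complex.normSq_nonneg _))
    have hy20' : y2fun η v t = 0 :=
      Complex.normSq_eq_zero.mp
        (le_antisymm (by linarith [Complex.normSq_nonneg (yfun η v t)]) (Complex.normSq_nonneg _))
    have hYzero : Complex.normSq (Yfun η v t) + Complex.normSq (Y2fun η v t) = 0 := by
      have hD := hd0
      unfold Dfun at hD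
      rw [hy0', hy20'] at hD
      simp only [star_zero, zero_mul, mul_zero, add_zero, zero_add, Complex.zero_re,
        sub_zero] at hD
      rw [← star_mul_self_re (Yfun η v t), ← star_mul_self_re (Y2fun η v t), ← Complex.add_re]
      exact hD
    have hY0' : Yfun η v t = 0 :=
      Complex.normSq_eq_zero.mp
        (le_antisymm (by linarith [Complex.normSq_nonneg (Y2fun η v t)]) (Complex.normSq_nonneg _))
    have hY20' : Y2fun η v t = 0 :=
      Complex.normSq_eq_zero.mp
        (le_antisymm (by linarith [Complex.normSq_nonneg (Yfun η v t)]) (Complex.normSq_nonneg _))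
    have hRS0 : xfun η v t (Sum.inr 0) = 0 ∧ xfun η v t (Sum.inr 1) = 0 := by
      have e1 : xfun η v t (Sum.inr 0) + Complex.I * xfun η v t (Sum.inr 1) = 0 := by
        have h := hy0'; unfold yfun at h
        rcases mul_eq_zero.mp h with h' | h'
        · exact absurd h' (Complex.exp_ne_zero _)
        · linear_combination (2:ℂ) * h'
      have e2 : xfun η v t (Sum.inr 0) - Complex.I * xfun η v t (Sum.inr 1) = 0 := by
        have h := hy20'; unfold y2fun at h
        rcases mul_eq_zero.mp h with h' | h'
        · exact absurd h' (Complex.exp_ne_zero _)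
        · linear_combination (2:ℂ) * h'
      constructor
      · linear_combination (e1 + e2)/2
      · linear_combination (-(Complex.I)/2)*e1 + (Complex.I/2)*e2
          + (xfun η v t (Sum.inr 1)) * Complex.I_sq
    have hPQ0 : xfun η v t (Sum.inl 0) = 0 ∧ xfun η v t (Sum.inl 1) = 0 := by
      have e1 : xfun η v t (Sum.inl 0) + Complex.I * xfun η v t (Sum.inl 1) = 0 := by
        have h := hY0'; unfold Yfun at h
        rcases mul_eq_zero.mp h with h' | h'
        · exact absurd h' (Complex.exp_ne_zero _)
        · linear_combination (2:ℂ) * h'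
      have e2 : xfun η v t (Sum.inl 0) - Complex.I * xfun η v t (Sum.inl 1) = 0 := by
        have h := hY20'; unfold Y2fun at h
        rcases mul_eq_zero.mp h with h' | h'
        · exact absurd h' (Complex.exp_ne_zero _)
        · linear_combination (2:ℂ) * h'
      constructor
      · linear_combination (e1 + e2)/2
      · linear_combination (-(Complex.I)/2)*e1 + (Complex.I/2)*e2
          + (xfun η v t (Sum.inl 1)) * Complex.I_sq
    intro k
    rcases k with k | k <;> fin_cases k
    · exact hPQ0.1
    · exact hPQ0.2
    · exact hRS0.1
    · exact hRS0.2
  -- conclude v = 0 by continuity at 0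
  have hv00 : ∀ k, v k = 0 := by
    intro k
    have hc : ContinuousAt (fun t => xfun η v t k) 0 :=
      (xfun_deriv η v δ e 0 (hη 0 hmem0) k).continuousAt
    have ht1 : Filter.Tendsto (fun t => xfun η v t k) (nhdsWithin 0 (Set.Ioi 0))
        (nhds (xfun η v 0 k)) := hc.continuousWithinAt
    have ht2 : Filter.Tendsto (fun t => xfun η v t k) (nhdsWithin 0 (Set.Ioi 0)) (nhds 0) := by
      apply Filter.Tendsto.congr' ?_ tendsto_const_nhds
      filter_upwards [Ioo_mem_nhdsGT_of_mem (⟨le_refl (0:ℝ), h2π⟩ : (0:ℝ) ∈ Set.Ico 0 (2*π))]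
        with s hs
      exact (hzero s hs k).symm
    have := tendsto_nhds_unique ht1 ht2
    rw [hx0 k] at this
    exact this
  exact hv0 (funext hv00)
end
end

section
/- Let δ > 1, e ∈ [0,1), and ω ∈ ℂ with |ω| = 1. Then for every twice continuously differentiable y : [0,2π] → ℂ with y(2π) = ω y(0), y′(2π) = ω y′(0), and y not identically zero, one has Re ∫₀^{2π} ( −y″(θ) − y(θ) + δ y(θ)/(1 + e cos θ) ) · conj(y(θ)) dθ > 0. That is, the operator 𝒜(δ,e) = −d²/dθ² − 1 + δ/(1 + e cos θ) is strictly positive on the domain D̄₁(ω,2π). -/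
open Real

noncomputable section

set_option maxHeartbeats 1000000 in
/-- for `δ > 1`, `e ∈ [0,1)` and `|ω| = 1`, the operator
`𝒜(δ,e) = -d²/dθ² - 1 + δ/(1 + e cos θ)` is strictly positive on `D̄₁(ω,2π)`:
for every C² function `y` with `y(2π) = ω y(0)`, `y′(2π) = ω y′(0)`, not identically
zero on `[0,2π]`, we have `Re ∫₀^{2π} (𝒜(δ,e)y)(θ) conj(y(θ)) dθ > 0`. -/
theorem A_operator_positive (δ e : ℝ) (hδ : 1 < δ) (he0 : 0 ≤ e) (he1 : e < 1)
    (ω : ℂ) (hω : ‖ω‖ = 1)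
    (y : ℝ → ℂ) (hy : ContDiff ℝ 2 y)
    (hbc : y (2 * π) = ω * y 0)
    (hbc' : deriv y (2 * π) = ω * deriv y 0)
    (hne : ∃ θ ∈ Set.Icc (0:ℝ) (2 * π), y θ ≠ 0) :
    0 < (∫ θ in (0:ℝ)..(2 * π),
      (-(deriv (deriv y) θ) - y θ + (δ / (1 + e * Real.cos θ) : ℝ) * y θ)
        * (starRingEnd ℂ) (y θ)).re := by
  have hπ : (0:ℝ) < 2 * π := by positivity
  -- regularity
  have h2 : ContDiff ℝ ((1:WithTop ℕ∞)+1) y := by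
    have h21 : ((2:ℕ) : WithTop ℕ∞) = (1:WithTop ℕ∞)+1 := by norm_num
    rw [← h21]; exact_mod_cast hy
  obtain ⟨hyd, -, h1⟩ := contDiff_succ_iff_deriv.mp h2
  obtain ⟨hyd1, hy2c⟩ := contDiff_one_iff_deriv.mp h1
  have hyc : Continuous y := hyd.continuous
  have hy1c : Continuous (deriv y) := hyd1.continuous
  have hdy : ∀ t, HasDerivAt y (deriv y t) t := fun t => (hyd t).hasDerivAt
  have hdy1 : ∀ t, HasDerivAt (deriv y) (deriv (deriv y) t) t := fun t => (hyd1 t).hasDerivAt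
  -- positivity of 1 + e cos
  have hcpos : ∀ t : ℝ, 0 < 1 + e * Real.cos t := by
    intro t
    nlinarith [Real.neg_one_le_cos t, Real.cos_le_one t, he0, he1]
  have hcne : ∀ t : ℝ, 1 + e * Real.cos t ≠ 0 := fun t => (hcpos t).ne'
  -- the functions
  set R : ℝ → ℝ := fun θ =>
    ((-(deriv (deriv y) θ) - y θ + ((δ / (1 + e * Real.cos θ) : ℝ) : ℂ) * y θ)
      * (starRingEnd ℂ) (y θ)).re with hR
  set P : ℝ → ℝ := fun θ =>
    Complex.normSq (deriv y θ * ((1 + e * Real.cos θ : ℝ) : ℂ)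
        + y θ * ((e * Real.sin θ : ℝ) : ℂ)) / (1 + e * Real.cos θ)^2
      + ((δ - 1) / (1 + e * Real.cos θ)) * Complex.normSq (y θ) with hP
  set G : ℝ → ℝ := fun θ =>
    (-(e * Real.sin θ) / (1 + e * Real.cos θ)) * Complex.normSq (y θ)
      - (deriv y θ * (starRingEnd ℂ) (y θ)).re with hG
  -- conj derivative helper
  have hconj : ∀ t, HasDerivAt (fun s => (starRingEnd ℂ) (y s))
      ((starRingEnd ℂ) (deriv y t)) t := fun t =>
    (Complex.conjCLE.hasFDerivAt.comp_hasDerivAt t (hdy t) : _)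
  -- derivative of G
  have hGder : ∀ t, HasDerivAt G (R t - P t) t := by
    intro t
    have hA1 : HasDerivAt (fun θ : ℝ => -(e * Real.sin θ)) (-(e * Real.cos t)) t := by
      exact (((Real.hasDerivAt_sin t).const_mul e).neg)
    have hA2 : HasDerivAt (fun θ : ℝ => 1 + e * Real.cos θ) (-(e * Real.sin t)) t := by
      have := ((Real.hasDerivAt_cos t).const_mul e).const_add 1
      simpa [mul_comm, mul_neg] using this
    have hquot := hA1.div hA2 (hcne t)
    have hNmul := (hdy t).mul (hconj t)
    have hN0 : HasDerivAt (fun θ => (y θ * (starRingEnd ℂ) (y θ)).re)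
        ((deriv y t * (starRingEnd ℂ) (y t) + y t * (starRingEnd ℂ) (deriv y t)).re) t :=
      (Complex.reCLM.hasFDerivAt.comp_hasDerivAt t hNmul : _)
    have hN : HasDerivAt (fun θ => Complex.normSq (y θ))
        ((deriv y t * (starRingEnd ℂ) (y t) + y t * (starRingEnd ℂ) (deriv y t)).re) t := by
      have : (fun θ => (y θ * (starRingEnd ℂ) (y θ)).re) = fun θ => Complex.normSq (y θ) := by
        funext θ; simp [Complex.mul_conj]
      rwa [this] at hN0
    have hsec0 := (hdy1 t).mul (hconj t)
    have hsec : HasDerivAt (fun θ => (deriv y θ * (starRingEnd ℂ) (y θ)).re)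
        ((deriv (deriv y) t * (starRingEnd ℂ) (y t)
          + deriv y t * (starRingEnd ℂ) (deriv y t)).re) t :=
      (Complex.reCLM.hasFDerivAt.comp_hasDerivAt t hsec0 : _)
    have hGd := (hquot.mul hN).sub hsec
    refine hGd.congr_deriv ?_
    symm
    have hc := hcne t
    simp only [hR, hP, Complex.add_re, Complex.sub_re, Complex.neg_re, Complex.mul_re,
      Complex.mul_im, Complex.conj_re, Complex.conj_im, Complex.ofReal_re, Complex.ofReal_im,
      Complex.normSq_apply, Complex.add_im, Complex.ofReal_mul, Pi.div_apply, Complex.sub_im, Complex.neg_im]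
    field_simp
    ring
  -- boundary values agree
  have hGbound : G (2 * π) = G 0 := by
    have hωconj : ω * (starRingEnd ℂ) ω = 1 := by
      rw [Complex.mul_conj]
      norm_cast
      rw [← Complex.sq_norm, hω]; norm_num
    have h1 : deriv y (2*π) * (starRingEnd ℂ) (y (2*π)) = deriv y 0 * (starRingEnd ℂ) (y 0) := by
      rw [hbc, hbc', map_mul]
      calc ω * deriv y 0 * ((starRingEnd ℂ) ω * (starRingEnd ℂ) (y 0))
          = (ω * (starRingEnd ℂ) ω) * (deriv y 0 * (starRingEnd ℂ) (y 0)) := by ring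
        _ = deriv y 0 * (starRingEnd ℂ) (y 0) := by rw [hωconj, one_mul]
    have h2 : Complex.normSq (y (2*π)) = Complex.normSq (y 0) := by
      rw [hbc, Complex.normSq_mul, Complex.normSq_eq_norm_sq, hω]; norm_num
    simp only [hG, h1, h2, Real.sin_two_pi, Real.cos_two_pi, Real.sin_zero, Real.cos_zero]
  -- continuity of R and P
  have hcC : Continuous fun θ : ℝ => 1 + e * Real.cos θ :=
    continuous_const.add (continuous_const.mul Real.continuous_cos)
  have hRc : Continuous R := by
    apply Continuous.comp Complex.continuous_re
    apply Continuous.mul _ (Complex.continuous_conj.comp hyc)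
    apply Continuous.add (Continuous.sub (hy2c.neg) hyc)
    apply Continuous.mul _ hyc
    exact Complex.continuous_ofReal.comp (Continuous.div continuous_const hcC hcne)
  have hPc : Continuous P := by
    apply Continuous.add
    · apply Continuous.div
      · exact Complex.continuous_normSq.comp
          ((hy1c.mul (Complex.continuous_ofReal.comp hcC)).add
            (hyc.mul (Complex.continuous_ofReal.comp
              (continuous_const.mul Real.continuous_sin))))
      · exact (hcC.pow 2)
      · intro t; exact pow_ne_zero 2 (hcne t)
    · exact ((Continuous.div continuous_const hcC hcne).mul
        (Complex.continuous_normSq.comp hyc))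
  -- FTC : ∫ (R - P) = G(2π) - G 0 = 0
  have hint : IntervalIntegrable (fun t => R t - P t) MeasureTheory.volume 0 (2*π) :=
    ((hRc.sub hPc).intervalIntegrable _ _)
  have hFTC : ∫ t in (0:ℝ)..(2*π), (R t - P t) = G (2*π) - G 0 :=
    intervalIntegral.integral_eq_sub_of_hasDerivAt (fun t _ => hGder t) hint
  rw [hGbound, sub_self] at hFTC
  have hRint : IntervalIntegrable R MeasureTheory.volume 0 (2*π) :=
    hRc.intervalIntegrable _ _
  have hPint : IntervalIntegrable P MeasureTheory.volume 0 (2*π) :=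
    hPc.intervalIntegrable _ _
  have hRP : ∫ t in (0:ℝ)..(2*π), R t = ∫ t in (0:ℝ)..(2*π), P t := by
    have := intervalIntegral.integral_sub hRint hPint
    rw [hFTC] at this
    linarith [this]
  -- the real part of the complex integral is ∫ R
  have hre : (∫ θ in (0:ℝ)..(2 * π),
      (-(deriv (deriv y) θ) - y θ + ((δ / (1 + e * Real.cos θ) : ℝ) : ℂ) * y θ)
        * (starRingEnd ℂ) (y θ)).re = ∫ t in (0:ℝ)..(2*π), R t := by
    have hci : IntervalIntegrable (fun θ =>
        (-(deriv (deriv y) θ) - y θ + ((δ / (1 + e * Real.cos θ) : ℝ) : ℂ) * y θ)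
          * (starRingEnd ℂ) (y θ)) MeasureTheory.volume 0 (2*π) := by
      apply Continuous.intervalIntegrable
      apply Continuous.mul _ (Complex.continuous_conj.comp hyc)
      apply Continuous.add (Continuous.sub (hy2c.neg) hyc)
      exact (Complex.continuous_ofReal.comp (Continuous.div continuous_const hcC hcne)).mul hyc
    have h := Complex.reCLM.intervalIntegral_comp_comm hci
    simp only [Complex.reCLM_apply] at h
    rw [← h]
  rw [hre, hRP]
  -- positivity of ∫ P
  have hPnn : ∀ t, 0 ≤ P t := by
    intro t
    have h1 : 0 < 1 + e * Real.cos t := hcpos t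
    have := Complex.normSq_nonneg (deriv y t * ((1 + e * Real.cos t : ℝ) : ℂ)
        + y t * ((e * Real.sin t : ℝ) : ℂ))
    have := Complex.normSq_nonneg (y t)
    have hδ1 : (0:ℝ) < δ - 1 := by linarith
    positivity
  obtain ⟨θ₀, hθ₀, hyθ₀⟩ := hne
  have hPθ₀ : 0 < P θ₀ := by
    have h1 : 0 < 1 + e * Real.cos θ₀ := hcpos θ₀
    have h2 : 0 < Complex.normSq (y θ₀) := Complex.normSq_pos.mpr hyθ₀
    have h3 : 0 ≤ Complex.normSq (deriv y θ₀ * ((1 + e * Real.cos θ₀ : ℝ) : ℂ)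
        + y θ₀ * ((e * Real.sin θ₀ : ℝ) : ℂ)) := Complex.normSq_nonneg _
    have hδ1 : (0:ℝ) < δ - 1 := by linarith
    have : 0 < ((δ - 1) / (1 + e * Real.cos θ₀)) * Complex.normSq (y θ₀) := by positivity
    simp only [hP]
    positivity
  rw [intervalIntegral.integral_pos_iff_support_of_nonneg_ae
    (Filter.Eventually.of_forall hPnn) hPint]
  refine ⟨hπ, ?_⟩
  have hopen : IsOpen (Function.support P ∩ Set.Ioo 0 (2*π)) :=
    (hPc.isOpen_support).inter isOpen_Ioo
  have hnonempty : (Function.support P ∩ Set.Ioo 0 (2*π)).Nonempty := by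
    have hmem : θ₀ ∈ Function.support P := by
      simp [Function.mem_support]; exact hPθ₀.ne'
    have hcl : θ₀ ∈ closure (Set.Ioo 0 (2*π)) := by
      rw [closure_Ioo hπ.ne]; exact hθ₀
    have := mem_closure_iff.mp hcl (Function.support P) (hPc.isOpen_support) hmem
    obtain ⟨x, hx1, hx2⟩ := this
    exact ⟨x, hx1, hx2⟩
  have hpos := hopen.measure_pos MeasureTheory.volume hnonempty
  refine lt_of_lt_of_le hpos (MeasureTheory.measure_mono ?_)
  exact Set.inter_subset_inter_right _ Set.Ioo_subset_Ioc_self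
end
end

section
/- Let δ > 1 and e ∈ [0,1), and let γ_{δ,e} : [0,2π] → M₂(ℝ) be the solution of γ′(θ) = J₂ diag(1, 1 − δ/(1 + e cos θ)) γ(θ), γ(0) = I₂, where J₂ = [[0,−1],[1,0]]. Then γ_{δ,e}(2π) is hyperbolic; more precisely, there exists a real number μ > 1 such that the eigenvalues of γ_{δ,e}(2π) are μ and μ⁻¹. -/
open Real Matrix Polynomial
open Set

noncomputable section

private lemma monoAux {T : ℝ} {f f' : ℝ → ℝ}
    (hf : ∀ t ∈ Set.Icc (0:ℝ) T, HasDerivAt f (f' t) t)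
    (h0 : ∀ t ∈ Set.Icc (0:ℝ) T, 0 ≤ f' t) : MonotoneOn f (Set.Icc 0 T) := by
  apply monotoneOn_of_deriv_nonneg (convex_Icc _ _)
  · exact fun t ht => (hf t ht).continuousAt.continuousWithinAt
  · rw [interior_Icc]
    exact fun t ht => ((hf t (Ioo_subset_Icc_self ht)).differentiableAt).differentiableWithinAt
  · rw [interior_Icc]
    intro t ht
    rw [(hf t (Ioo_subset_Icc_self ht)).deriv]
    exact h0 t (Ioo_subset_Icc_self ht)

private lemma strictMonoAux {T : ℝ} {f f' : ℝ → ℝ}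
    (hf : ∀ t ∈ Set.Icc (0:ℝ) T, HasDerivAt f (f' t) t)
    (h0 : ∀ t ∈ Set.Ioo (0:ℝ) T, 0 < f' t) : StrictMonoOn f (Set.Icc 0 T) := by
  apply strictMonoOn_of_deriv_pos (convex_Icc _ _)
  · exact fun t ht => (hf t ht).continuousAt.continuousWithinAt
  · rw [interior_Icc]
    intro t ht
    rw [(hf t (Ioo_subset_Icc_self ht)).deriv]
    exact h0 t ht

/-- Core positivity lemma for the system u' = p w, w' = q u with p,q > 0. -/
private lemma core {T : ℝ} (hT : 0 < T) {u w p q : ℝ → ℝ}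
    (hp : ∀ t ∈ Set.Icc (0:ℝ) T, 0 < p t) (hq : ∀ t ∈ Set.Icc (0:ℝ) T, 0 < q t)
    (hu : ∀ t ∈ Set.Icc (0:ℝ) T, HasDerivAt u (p t * w t) t)
    (hw : ∀ t ∈ Set.Icc (0:ℝ) T, HasDerivAt w (q t * u t) t)
    (hu0 : 0 < u 0) (hw0 : 0 ≤ w 0) :
    u 0 < u T ∧ w 0 < w T := by
  have h0T : (0:ℝ) ∈ Set.Icc (0:ℝ) T := ⟨le_refl _, hT.le⟩
  have hTT : T ∈ Set.Icc (0:ℝ) T := ⟨hT.le, le_refl _⟩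
  -- u*w is monotone, hence nonnegative
  have m1 : MonotoneOn (fun t => u t * w t) (Set.Icc 0 T) := by
    apply monoAux (f' := fun t => p t * w t * w t + u t * (q t * u t))
    · exact fun t ht => (hu t ht).mul (hw t ht)
    · intro t ht
      nlinarith [mul_nonneg (hp t ht).le (sq_nonneg (w t)),
        mul_nonneg (hq t ht).le (sq_nonneg (u t))]
  have huw : ∀ t ∈ Set.Icc (0:ℝ) T, 0 ≤ u t * w t := by
    intro t ht
    have := m1 h0T ht ht.1
    have h00 : 0 ≤ u 0 * w 0 := mul_nonneg hu0.le hw0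
    simpa using h00.trans this
  -- u^2 is monotone
  have m2 : MonotoneOn (fun t => u t * u t) (Set.Icc 0 T) := by
    apply monoAux (f' := fun t => p t * w t * u t + u t * (p t * w t))
    · exact fun t ht => (hu t ht).mul (hu t ht)
    · intro t ht
      nlinarith [mul_nonneg (hp t ht).le (huw t ht)]
  -- u is positive everywhere on [0,T]
  have hupos : ∀ t ∈ Set.Icc (0:ℝ) T, 0 < u t := by
    intro t ht
    by_contra hcon
    push_neg at hcon
    have hsq : u 0 * u 0 ≤ u t * u t := by simpa using m2 h0T ht ht.1
    have hneg : u t < 0 := lt_of_le_of_ne hcon (by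
      intro h
      nlinarith)
    -- IVT on [0, t]
    have hcont : ContinuousOn u (Set.Icc 0 t) := fun s hs =>
      ((hu s ⟨hs.1, hs.2.trans ht.2⟩).continuousAt).continuousWithinAt
    have hiv : (0:ℝ) ∈ Set.Icc (u t) (u 0) := ⟨hneg.le, hu0.le⟩
    obtain ⟨s, hs, hus⟩ := intermediate_value_Icc' ht.1 hcont hiv
    have : u 0 * u 0 ≤ u s * u s := by
      simpa using m2 h0T ⟨hs.1, hs.2.trans ht.2⟩ hs.1
    rw [hus] at this
    nlinarith
  -- w is strictly monotone
  have m3 : StrictMonoOn w (Set.Icc 0 T) :=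
    strictMonoAux hw (fun t ht => mul_pos (hq t (Ioo_subset_Icc_self ht))
      (hupos t (Ioo_subset_Icc_self ht)))
  have hwpos : ∀ t ∈ Set.Ioo (0:ℝ) T, 0 < w t := fun t ht =>
    hw0.trans_lt (m3 h0T (Ioo_subset_Icc_self ht) ht.1)
  -- u is strictly monotone
  have m4 : StrictMonoOn u (Set.Icc 0 T) :=
    strictMonoAux hu (fun t ht => mul_pos (hp t (Ioo_subset_Icc_self ht)) (hwpos t ht))
  exact ⟨m4 h0T hTT hT, m3 h0T hTT hT⟩


private lemma entry0 (a : ℝ) (M : Matrix (Fin 2) (Fin 2) ℝ) (j : Fin 2) :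
    ((!![0, -1; 1, 0] : Matrix (Fin 2) (Fin 2) ℝ) * !![1, 0; 0, a] * M) 0 j
      = -(a * M 1 j) := by
  simp [Matrix.mul_apply, Fin.sum_univ_two]

private lemma entry1 (a : ℝ) (M : Matrix (Fin 2) (Fin 2) ℝ) (j : Fin 2) :
    ((!![0, -1; 1, 0] : Matrix (Fin 2) (Fin 2) ℝ) * !![1, 0; 0, a] * M) 1 j
      = M 0 j := by
  simp [Matrix.mul_apply, Fin.sum_univ_two]

private lemma charpoly_fin_two (M : Matrix (Fin 2) (Fin 2) ℝ) :
    M.charpoly = X ^ 2 - C (M 0 0 + M 1 1) * X + C (M 0 0 * M 1 1 - M 0 1 * M 1 0) := by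
  rw [Matrix.charpoly, Matrix.det_fin_two, charmatrix_apply_eq, charmatrix_apply_eq,
    charmatrix_apply_ne _ _ _ (by decide), charmatrix_apply_ne _ _ _ (by decide)]
  simp only [C_add, C_mul, C_sub]
  ring

private lemma eval_charpoly_det (B : Matrix (Fin 2) (Fin 2) ℂ) (z : ℂ) :
    (B.charpoly).eval z = (algebraMap ℂ (Matrix (Fin 2) (Fin 2) ℂ) z - B).det := by
  rw [Matrix.charpoly, eval_det, matPolyEquiv_charmatrix]
  simp only [eval_sub, eval_X, eval_C, Matrix.scalar_apply, Matrix.algebraMap_eq_diagonal]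
  congr 1


private def uu (e : ℝ) (γ : ℝ → Matrix (Fin 2) (Fin 2) ℝ) (j : Fin 2) : ℝ → ℝ :=
  fun t => γ t 1 j / (1 + e * Real.cos t)

private def ww (e : ℝ) (γ : ℝ → Matrix (Fin 2) (Fin 2) ℝ) (j : Fin 2) : ℝ → ℝ :=
  fun t => (1 + e * Real.cos t) * γ t 0 j + e * Real.sin t * γ t 1 j

/-- for `δ > 1`, `e ∈ [0,1)`, the monodromy matrix `γ_{δ,e}(2π)` of
`γ′(θ) = J₂ diag(1, 1 - δ/(1 + e cos θ)) γ(θ)`, `γ(0) = I₂`, is hyperbolic; more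
precisely, there is `μ > 1` such that its eigenvalues are `μ` and `μ⁻¹`. -/
theorem kepler_type_monodromy_hyperbolic (δ e : ℝ) (hδ : 1 < δ) (he0 : 0 ≤ e) (he1 : e < 1)
    (γ : ℝ → Matrix (Fin 2) (Fin 2) ℝ)
    (hγ0 : γ 0 = 1)
    (hγ : ∀ θ ∈ Set.Icc (0:ℝ) (2 * π), ∀ i j,
      HasDerivAt (fun t => γ t i j)
        (((!![0, -1; 1, 0] : Matrix (Fin 2) (Fin 2) ℝ) *
          !![1, 0; 0, 1 - δ / (1 + e * Real.cos θ)] * γ θ) i j) θ) :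
    IsHyperbolicMat (γ (2 * π)) ∧
    ∃ μ : ℝ, 1 < μ ∧
      (γ (2 * π)).charpoly = (X - C μ) * (X - C μ⁻¹) := by
  have hπ := Real.pi_pos
  have hT : (0:ℝ) < 2 * π := by linarith
  have hc : ∀ t : ℝ, 0 < 1 + e * Real.cos t := by
    intro t
    nlinarith [Real.neg_one_le_cos t, Real.cos_le_one t]
  have hc' : ∀ t : ℝ, HasDerivAt (fun s => 1 + e * Real.cos s) (-(e * Real.sin t)) t := by
    intro t
    have := ((Real.hasDerivAt_cos t).const_mul e).const_add 1
    refine this.congr_deriv ?_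
    symm
    ring
  -- entry derivatives
  have hx : ∀ (j : Fin 2), ∀ θ ∈ Set.Icc (0:ℝ) (2*π),
      HasDerivAt (fun t => γ t 0 j) (-((1 - δ / (1 + e * Real.cos θ)) * γ θ 1 j)) θ := by
    intro j θ hθ
    have h := hγ θ hθ 0 j
    have e0 : ((!![0, -1; 1, 0] : Matrix (Fin 2) (Fin 2) ℝ) *
        !![1, 0; 0, 1 - δ / (1 + e * Real.cos θ)] * γ θ) 0 j
        = -((1 - δ / (1 + e * Real.cos θ)) * γ θ 1 j) := by
      simp [Matrix.mul_apply, Fin.sum_univ_two]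
      ring
    rwa [e0] at h
  have hy : ∀ (j : Fin 2), ∀ θ ∈ Set.Icc (0:ℝ) (2*π),
      HasDerivAt (fun t => γ t 1 j) (γ θ 0 j) θ := by
    intro j θ hθ
    have h := hγ θ hθ 1 j
    have e1 : ((!![0, -1; 1, 0] : Matrix (Fin 2) (Fin 2) ℝ) *
        !![1, 0; 0, 1 - δ / (1 + e * Real.cos θ)] * γ θ) 1 j
        = γ θ 0 j := by
      simp [Matrix.mul_apply, Fin.sum_univ_two]
    rwa [e1] at h
  -- derivatives of uu and ww
  have hu' : ∀ (j : Fin 2), ∀ θ ∈ Set.Icc (0:ℝ) (2*π),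
      HasDerivAt (uu e γ j) ((1 / (1 + e * Real.cos θ)^2) * ww e γ j θ) θ := by
    intro j θ hθ
    have h := (hy j θ hθ).div (hc' θ) (hc θ).ne'
    refine h.congr_deriv ?_
    symm
    rw [ww]
    field_simp [(hc θ).ne']
    ring
  have hw' : ∀ (j : Fin 2), ∀ θ ∈ Set.Icc (0:ℝ) (2*π),
      HasDerivAt (ww e γ j) (((δ - 1) * (1 + e * Real.cos θ)) * uu e γ j θ) θ := by
    intro j θ hθ
    have hs : HasDerivAt (fun t => e * Real.sin t) (e * Real.cos θ) θ :=
      (Real.hasDerivAt_sin θ).const_mul e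
    have h := ((hc' θ).mul (hx j θ hθ)).add (hs.mul (hy j θ hθ))
    refine h.congr_deriv ?_
    symm
    rw [uu]
    field_simp [(hc θ).ne']
    ring
  -- Wronskian is constant = 1
  have hdet1 : γ (2*π) 0 0 * γ (2*π) 1 1 - γ (2*π) 0 1 * γ (2*π) 1 0 = 1 := by
    have hW : ∀ θ ∈ Set.Icc (0:ℝ) (2*π),
        HasDerivAt (fun t => γ t 0 0 * γ t 1 1 - γ t 0 1 * γ t 1 0) 0 θ := by
      intro θ hθ
      have h := ((hx 0 θ hθ).mul (hy 1 θ hθ)).sub ((hx 1 θ hθ).mul (hy 0 θ hθ))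
      refine h.congr_deriv ?_
      symm
      ring
    have hconst := constant_of_has_deriv_right_zero
      (f := fun t => γ t 0 0 * γ t 1 1 - γ t 0 1 * γ t 1 0) (a := 0) (b := 2*π)
      (fun s hs => ((hW s hs).continuousAt).continuousWithinAt)
      (fun s hs => (hW s (Set.Ico_subset_Icc_self hs)).hasDerivWithinAt)
    have h2 := hconst (2*π) (Set.right_mem_Icc.mpr hT.le)
    norm_num [hγ0, Matrix.one_apply] at h2
    exact h2
  -- initial values
  have hcos0 : Real.cos 0 = 1 := Real.cos_zero
  have hsin0 : Real.sin 0 = 0 := Real.sin_zero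
  have hγ000 : γ 0 0 0 = 1 := by rw [hγ0]; norm_num [Matrix.one_apply]
  have hγ011 : γ 0 1 1 = 1 := by rw [hγ0]; norm_num [Matrix.one_apply]
  have hγ010 : γ 0 1 0 = 0 := by rw [hγ0]; norm_num [Matrix.one_apply]
  have hγ001 : γ 0 0 1 = 0 := by rw [hγ0]; norm_num [Matrix.one_apply]
  have hppos : ∀ t ∈ Set.Icc (0:ℝ) (2*π), 0 < 1 / (1 + e * Real.cos t)^2 := by
    intro t _
    exact one_div_pos.mpr (pow_pos (hc t) 2)
  have hqpos : ∀ t ∈ Set.Icc (0:ℝ) (2*π), 0 < (δ - 1) * (1 + e * Real.cos t) := by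
    intro t _
    have := hc t
    nlinarith
  -- column 0 : ww increases
  have col0 := core hT hqpos hppos (hw' 0) (hu' 0)
    (by rw [ww]; simp [hcos0, hsin0, hγ000, hγ010]; linarith)
    (by rw [uu]; simp [hcos0, hγ010])
  -- column 1 : uu increases
  have col1 := core hT hppos hqpos (hu' 1) (hw' 1)
    (by rw [uu]; simp [hcos0, hγ011]; linarith)
    (by rw [ww]; simp [hcos0, hsin0, hγ001])
  have hcos2 : Real.cos (2*π) = 1 := Real.cos_two_pi
  have hsin2 : Real.sin (2*π) = 0 := Real.sin_two_pi
  have h00 : 1 < γ (2*π) 0 0 := by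
    have h := col0.1
    rw [ww, ww] at h
    simp [hcos0, hsin0, hcos2, hsin2, hγ000, hγ010] at h
    nlinarith [hc (2*π)]
  have h11 : 1 < γ (2*π) 1 1 := by
    have h := col1.1
    rw [uu, uu] at h
    simp [hcos0, hcos2, hγ011] at h
    have hpos : (0:ℝ) < 1 + e := by linarith
    rw [← one_div, div_lt_div_iff₀ hpos hpos] at h
    nlinarith
  -- final algebra
  clear hγ hγ0 hx hy hu' hw' hc hc' col0 col1 hppos hqpos hcos0 hsin0 hcos2 hsin2
  clear hγ000 hγ011 hγ010 hγ001 hπ hT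
  set tr : ℝ := γ (2*π) 0 0 + γ (2*π) 1 1 with htrdef
  have htr2 : 2 < tr := by rw [htrdef]; linarith
  have hnn : (0:ℝ) ≤ tr^2 - 4 := by nlinarith
  set s : ℝ := Real.sqrt (tr^2 - 4) with hsdef
  have hs2 : s^2 = tr^2 - 4 := Real.sq_sqrt hnn
  have hspos : 0 < s := Real.sqrt_pos.mpr (by nlinarith)
  have hslt : s < tr :=
    lt_of_pow_lt_pow_left₀ 2 (by linarith) (by rw [hs2]; linarith)
  set μ : ℝ := (tr + s)/2 with hμdef
  set ν : ℝ := (tr - s)/2 with hνdef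
  have hμ1 : 1 < μ := by rw [hμdef]; linarith
  have hν0 : 0 < ν := by rw [hνdef]; linarith
  have hμν : μ * ν = 1 := by
    have h4 : μ * ν = (tr^2 - s^2)/4 := by rw [hμdef, hνdef]; ring
    rw [h4, hs2]
    ring
  have hν1 : ν < 1 := by nlinarith
  have hinv : μ⁻¹ = ν := inv_eq_of_mul_eq_one_right hμν
  have hkey : (γ (2*π)).charpoly = (X - C μ) * (X - C μ⁻¹) := by
    rw [_root_.charpoly_fin_two, hdet1, hinv]
    rw [show (γ (2*π) 0 0 + γ (2*π) 1 1 : ℝ) = μ + ν by rw [hμdef, hνdef]; ring]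
    rw [show (1:ℝ) = μ * ν from hμν.symm]
    rw [C_add, C_mul]
    ring
  refine ⟨?_, μ, hμ1, hkey⟩
  intro z hz
  rw [spectrum.mem_iff] at hz
  have hdet0 : ((γ (2*π)).map (Complex.ofReal)).charpoly.eval z = 0 := by
    by_contra hne
    apply hz
    rw [Matrix.isUnit_iff_isUnit_det, isUnit_iff_ne_zero]
    rw [eval_charpoly_det] at hne
    exact hne
  rw [show (Complex.ofReal : ℝ → ℂ) = ⇑Complex.ofRealHom from rfl,
    Matrix.charpoly_map, hkey] at hdet0
  simp only [Polynomial.map_mul, Polynomial.map_sub, Polynomial.map_X, Polynomial.map_C,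
    eval_mul, eval_sub, eval_X, eval_C, mul_eq_zero, sub_eq_zero] at hdet0
  rcases hdet0 with h | h <;> rw [h]
  · simp only [Complex.ofRealHom_eq_coe, Complex.norm_real, Real.norm_eq_abs]
    rw [abs_of_pos (by linarith)]
    linarith
  · simp only [Complex.ofRealHom_eq_coe, Complex.norm_real, Real.norm_eq_abs]
    rw [hinv, abs_of_pos hν0]
    linarith
end
end

section
/- Let δ > 1, e ∈ [0,1), and ω ∈ ℂ with |ω| = 1. Then for every twice continuously differentiable y : [0,2π] → ℂ² with y(2π) = ω y(0), y′(2π) = ω y′(0), and y not identically zero, one has Re ∫₀^{2π} ⟨ −y″(θ) − 2J₂ y′(θ) + δ y(θ)/(1 + e cos θ), y(θ) ⟩ dθ > 0, where ⟨·,·⟩ is the Hermitian inner product on ℂ². That is, the operator −(d²/dθ²)I₂ − 2J₂ d/dθ + δ I₂/(1 + e cos θ) is strictly positive on D̄₂(ω,2π). -/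
open Real Matrix

noncomputable section

namespace P14

def Z0 (y : ℝ → Fin 2 → ℂ) (t : ℝ) : ℂ := (Real.cos t : ℂ) * y t 0 - (Real.sin t : ℂ) * y t 1
def Z1 (y : ℝ → Fin 2 → ℂ) (t : ℝ) : ℂ := (Real.sin t : ℂ) * y t 0 + (Real.cos t : ℂ) * y t 1
def P0 (y : ℝ → Fin 2 → ℂ) (t : ℝ) : ℂ :=
  ((-Real.sin t : ℝ) : ℂ) * y t 0 + (Real.cos t : ℂ) * deriv y t 0
    - ((Real.cos t : ℂ) * y t 1 + (Real.sin t : ℂ) * deriv y t 1)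
def P1 (y : ℝ → Fin 2 → ℂ) (t : ℝ) : ℂ :=
  (Real.cos t : ℂ) * y t 0 + (Real.sin t : ℂ) * deriv y t 0
    + (((-Real.sin t : ℝ) : ℂ) * y t 1 + (Real.cos t : ℂ) * deriv y t 1)
def rr (e t : ℝ) : ℝ := -(e * Real.sin t) / (1 + e * Real.cos t)
def Rd (e t : ℝ) : ℝ :=
  (-(e * Real.cos t) * (1 + e * Real.cos t) - -(e * Real.sin t) * (e * -Real.sin t))
    / (1 + e * Real.cos t) ^ 2
def G (e : ℝ) (y : ℝ → Fin 2 → ℂ) (t : ℝ) : ℂ :=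
  -(P0 y t * star (Z0 y t) + P1 y t * star (Z1 y t))
    + ((rr e t : ℝ) : ℂ) * (Z0 y t * star (Z0 y t) + Z1 y t * star (Z1 y t))
def Fc (δ e : ℝ) (y : ℝ → Fin 2 → ℂ) (θ : ℝ) : ℂ :=
  ∑ i : Fin 2,
      (-(deriv (deriv y) θ i)
        - 2 * ((!![0, -1; 1, 0] : Matrix (Fin 2) (Fin 2) ℂ).mulVec (deriv y θ)) i
        + ((δ / (1 + e * Real.cos θ) : ℝ) : ℂ) * y θ i) * (starRingEnd ℂ) (y θ i)
def Hr (δ e : ℝ) (y : ℝ → Fin 2 → ℂ) (t : ℝ) : ℝ :=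
  Complex.normSq (P0 y t - ((rr e t : ℝ):ℂ) * Z0 y t)
    + Complex.normSq (P1 y t - ((rr e t : ℝ):ℂ) * Z1 y t)
    + ((δ - 1) / (1 + e * Real.cos t)) * (Complex.normSq (y t 0) + Complex.normSq (y t 1))

lemma main_deriv (δ e : ℝ) (he0 : 0 ≤ e) (he1 : e < 1) (y : ℝ → Fin 2 → ℂ)
    (hy : ContDiff ℝ 2 y) (t : ℝ) :
    HasDerivAt (fun s => (G e y s).re) ((Fc δ e y t).re - Hr δ e y t) t := by
  have hupos : 0 < 1 + e * Real.cos t := by nlinarith [Real.neg_one_le_cos t, Real.cos_le_one t]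
  have hune : (1 + e * Real.cos t) ≠ 0 := ne_of_gt hupos
  have h1 : ContDiff ℝ (1+1) y := by exact_mod_cast hy
  have h2 : ContDiff ℝ 1 (deriv y) := (contDiff_succ_iff_deriv.mp h1).2.2
  have hdiff : Differentiable ℝ y := hy.differentiable (by norm_num)
  have hdiff' : Differentiable ℝ (deriv y) := h2.differentiable (by norm_num)
  have hcomp : ∀ (i : Fin 2) (t : ℝ), HasDerivAt (fun s => y s i) (deriv y t i) t :=
    fun i t => by
      simpa [Function.comp_def] using ((ContinuousLinearMap.proj (R := ℝ) (φ := fun _ : Fin 2 => ℂ) i).hasFDerivAt.comp_hasDerivAt t (hdiff t).hasDerivAt)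
  have hcomp' : ∀ (i : Fin 2) (t : ℝ), HasDerivAt (fun s => deriv y s i) (deriv (deriv y) t i) t :=
    fun i t => by
      simpa [Function.comp_def] using ((ContinuousLinearMap.proj (R := ℝ) (φ := fun _ : Fin 2 => ℂ) i).hasFDerivAt.comp_hasDerivAt t (hdiff' t).hasDerivAt)
  have hcos : HasDerivAt (fun s : ℝ => ((Real.cos s : ℝ) : ℂ)) ((-Real.sin t : ℝ) : ℂ) t :=
    (Real.hasDerivAt_cos t).ofReal_comp
  have hsin : HasDerivAt (fun s : ℝ => ((Real.sin s : ℝ) : ℂ)) ((Real.cos t : ℝ) : ℂ) t :=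
    (Real.hasDerivAt_sin t).ofReal_comp
  have hnsin : HasDerivAt (fun s : ℝ => ((-Real.sin s : ℝ) : ℂ)) ((-Real.cos t : ℝ) : ℂ) t :=
    ((Real.hasDerivAt_sin t).neg).ofReal_comp
  have hZ0 : HasDerivAt (Z0 y) (P0 y t) t := (hcos.mul (hcomp 0 t)).sub (hsin.mul (hcomp 1 t))
  have hZ1 : HasDerivAt (Z1 y) (P1 y t) t := (hsin.mul (hcomp 0 t)).add (hcos.mul (hcomp 1 t))
  have hP0 := ((hnsin.mul (hcomp 0 t)).add (hcos.mul (hcomp' 0 t))).sub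
      ((hcos.mul (hcomp 1 t)).add (hsin.mul (hcomp' 1 t)))
  have hP1 := ((hcos.mul (hcomp 0 t)).add (hsin.mul (hcomp' 0 t))).add
      ((hnsin.mul (hcomp 1 t)).add (hcos.mul (hcomp' 1 t)))
  have hP0' : HasDerivAt (P0 y) _ t := hP0
  have hP1' : HasDerivAt (P1 y) _ t := hP1
  have hrr : HasDerivAt (fun s => ((rr e s : ℝ) : ℂ)) ((Rd e t : ℝ) : ℂ) t := by
    refine HasDerivAt.ofReal_comp ?_
    exact (((Real.hasDerivAt_sin t).const_mul e).neg).div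
      (((Real.hasDerivAt_cos t).const_mul e).const_add 1) hune
  have hG : HasDerivAt (G e y) _ t :=
    (((hP0'.mul hZ0.star).add (hP1'.mul hZ1.star)).neg).add
      (hrr.mul ((hZ0.mul hZ0.star).add (hZ1.mul hZ1.star)))
  have hval : HasDerivAt (G e y) (Fc δ e y t - ((Hr δ e y t : ℝ) : ℂ)) t := by
    convert hG using 1
    unfold Fc Hr Z0 Z1 P0 P1 rr Rd
    simp only [Fin.sum_univ_two, Matrix.mulVec, Matrix.cons_val', Matrix.cons_val_zero,
      Matrix.cons_val_one, Matrix.head_cons, Matrix.head_fin_const, Matrix.empty_val',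
      Matrix.cons_val_fin_one, dotProduct, Fin.isValue, Complex.star_def, Matrix.of_apply,
      map_sub, map_add, _root_.map_mul, map_neg, map_div₀, Complex.conj_ofReal]
    push_cast
    simp only [← Complex.mul_conj, map_sub, map_add, _root_.map_mul, map_neg, map_div₀,
      ← Complex.cos_conj, ← Complex.sin_conj, Complex.conj_ofReal, show (starRingEnd ℂ) (1:ℂ) = 1 from map_one _]
    have pyth : Complex.sin (t:ℂ) ^ 2 + Complex.cos (t:ℂ) ^ 2 = 1 := Complex.sin_sq_add_cos_sq _
    have hU : (1 : ℂ) + (e:ℂ) * Complex.cos (t:ℂ) ≠ 0 := by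
      have := hune
      rw [← Complex.ofReal_ne_zero] at this
      push_cast at this
      convert this using 2
    set cs := Complex.cos (t:ℂ) with hcs
    set sn := Complex.sin (t:ℂ) with hsn
    set Y0 := y t 0 with hY0
    set Y1 := y t 1 with hY1
    set W0 := (starRingEnd ℂ) (y t 0) with hW0
    set W1 := (starRingEnd ℂ) (y t 1) with hW1
    set Q0 := deriv y t 0 with hQ0
    set Q1 := deriv y t 1 with hQ1
    set R0 := (starRingEnd ℂ) (deriv y t 0) with hR0
    set R1 := (starRingEnd ℂ) (deriv y t 1) with hR1
    set A0 := deriv (deriv y) t 0 with hA0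
    set A1 := deriv (deriv y) t 1 with hA1
    simp only [div_eq_mul_inv, ← inv_pow]
    set E := ((e:ℝ):ℂ) with hE
    set D := ((δ:ℝ):ℂ) with hD
    set iu := (1 + E * cs)⁻¹ with hiu
    have hv : (1 + E*cs) * iu = 1 := mul_inv_cancel₀ hU
    linear_combination ((-1)*Y1*W1*iu^2 + (-1)*Y1*W1*cs*E*iu^2 + (-1)*Y0*W0*iu^2 + (-1)*Y0*W0*cs*E*iu^2 + (-2)*Q1*W0*iu^2 + (-4)*Q1*W0*cs*E*iu^2 + (-2)*Q1*W0*cs^2*E^2*iu^2 + 2*Q0*W1*iu^2 + 4*Q0*W1*cs*E*iu^2 + 2*Q0*W1*cs^2*E^2*iu^2 + A1*W1*iu^2 + 2*A1*W1*cs*E*iu^2 + A1*W1*cs^2*E^2*iu^2 + A0*W0*iu^2 + 2*A0*W0*cs*E*iu^2 + A0*W0*cs^2*E^2*iu^2) * pyth + ((-1)*Y1*W1*iu + Y1*W1*sn^2 + Y1*W1*sn^2*iu + Y1*W1*cs*sn^2*E*iu + Y1*W1*cs^2 + Y1*W1*cs^2*iu + Y1*W1*cs^3*E*iu + (-1)*Y0*W0*iu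 + Y0*W0*sn^2 + Y0*W0*sn^2*iu + Y0*W0*cs*sn^2*E*iu + Y0*W0*cs^2 + Y0*W0*cs^2*iu + Y0*W0*cs^3*E*iu + (-2)*Q1*W0 + (-2)*Q1*W0*iu + 2*Q1*W0*sn^2 + 2*Q1*W0*sn^2*iu + (-2)*Q1*W0*cs*E*iu + 2*Q1*W0*cs*sn^2*E*iu + 2*Q1*W0*cs^2 + 2*Q1*W0*cs^2*iu + 2*Q1*W0*cs^3*E*iu + 2*Q0*W1 + 2*Q0*W1*iu + (-2)*Q0*W1*sn^2 + (-2)*Q0*W1*sn^2*iu + 2*Q0*W1*cs*E*iu + (-2)*Q0*W1*cs*sn^2*E*iu + (-2)*Q0*W1*cs^2 + (-2)*Q0*W1*cs^2*iu + (-2)*Q0*W1*cs^3*E*iu + A1*W1 + A1*W1*iu + (-1)*A1*W1*sn^2 + (-1)*A1*W1*sn^2*iu + A1*W1*cs*E*iu + (-1)*A1*W1*cs*sn^2*E*iu + (-1)*A1*W1*cs^2 + (-1)*A1*W1*cs^2*iu + (-1)*A1*W1*cs^3*E*iu + A0*W0 + A0*W0*iu + (-1)*A0*W0*sn^2 + (-1)*A0*W0*sn^2*iu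 + A0*W0*cs*E*iu + (-1)*A0*W0*cs*sn^2*E*iu + (-1)*A0*W0*cs^2 + (-1)*A0*W0*cs^2*iu + (-1)*A0*W0*cs^3*E*iu) * hv
  have := Complex.reCLM.hasFDerivAt.comp_hasDerivAt t hval
  simpa [Function.comp_def] using this

lemma boundary (e : ℝ) (ω : ℂ) (hω : ‖ω‖ = 1) (y : ℝ → Fin 2 → ℂ)
    (hbc : y (2 * π) = ω • y 0) (hbc' : deriv y (2 * π) = ω • deriv y 0) :
    G e y (2 * π) = G e y 0 := by
  have hωn : ω * (starRingEnd ℂ) ω = 1 := by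
    rw [Complex.mul_conj]
    norm_cast
    simp [← Complex.sq_norm, hω]
  have h0 : ∀ i, y (2 * π) i = ω * y 0 i := fun i => by rw [hbc]; simp
  have h1 : ∀ i, deriv y (2 * π) i = ω * deriv y 0 i := fun i => by rw [hbc']; simp
  unfold G Z0 Z1 P0 P1 rr
  rw [Real.cos_two_pi, Real.sin_two_pi, Real.cos_zero, Real.sin_zero, h0 0, h0 1, h1 0, h1 1]
  push_cast
  simp only [_root_.map_mul, map_sub, map_add, map_neg, mul_zero, zero_mul, mul_one, one_mul,
    neg_zero, zero_div, zero_add, add_zero, sub_zero, zero_sub, mul_neg, neg_neg]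
  simp only [Complex.star_def, _root_.map_mul]
  linear_combination (-((deriv y 0 0 - y 0 1) * (starRingEnd ℂ) (y 0 0) +
    (y 0 0 + deriv y 0 1) * (starRingEnd ℂ) (y 0 1))) * hωn

lemma contHr (δ e : ℝ) (he0 : 0 ≤ e) (he1 : e < 1) (y : ℝ → Fin 2 → ℂ)
    (hy : ContDiff ℝ 2 y) : Continuous (Hr δ e y) ∧ Continuous (Fc δ e y) := by
  have hu : ∀ t : ℝ, 1 + e * Real.cos t ≠ 0 := fun t => by
    nlinarith [Real.neg_one_le_cos t, Real.cos_le_one t]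
  have h1 : ContDiff ℝ (1+1) y := by exact_mod_cast hy
  have h2 : ContDiff ℝ 1 (deriv y) := (contDiff_succ_iff_deriv.mp h1).2.2
  have hyc : Continuous y := hy.continuous
  have hdc : Continuous (deriv y) := h2.continuous
  have hddc : Continuous (deriv (deriv y)) := (contDiff_one_iff_deriv.mp h2).2
  have hy0 : Continuous fun t => y t 0 := (continuous_apply _).comp hyc
  have hy1 : Continuous fun t => y t 1 := (continuous_apply _).comp hyc
  have hq0 : Continuous fun t => deriv y t 0 := (continuous_apply _).comp hdc
  have hq1 : Continuous fun t => deriv y t 1 := (continuous_apply _).comp hdc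
  have ha0 : Continuous fun t => deriv (deriv y) t 0 := (continuous_apply _).comp hddc
  have ha1 : Continuous fun t => deriv (deriv y) t 1 := (continuous_apply _).comp hddc
  have hcu : Continuous fun t : ℝ => 1 + e * Real.cos t := by continuity
  have hfrac : Continuous fun t : ℝ => ((δ / (1 + e * Real.cos t) : ℝ) : ℂ) :=
    Complex.continuous_ofReal.comp (continuous_const.div hcu hu)
  have hfrac2 : Continuous fun t : ℝ => ((δ - 1) / (1 + e * Real.cos t) : ℝ) :=
    continuous_const.div hcu hu
  have hrrc : Continuous fun t : ℝ => ((rr e t : ℝ) : ℂ) := by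
    refine Complex.continuous_ofReal.comp ?_
    exact ((continuous_const.mul Real.continuous_sin).neg).div hcu hu
  have hcos : Continuous fun t : ℝ => ((Real.cos t : ℝ) : ℂ) :=
    Complex.continuous_ofReal.comp Real.continuous_cos
  have hsin : Continuous fun t : ℝ => ((Real.sin t : ℝ) : ℂ) :=
    Complex.continuous_ofReal.comp Real.continuous_sin
  have hnsin : Continuous fun t : ℝ => ((-Real.sin t : ℝ) : ℂ) :=
    Complex.continuous_ofReal.comp Real.continuous_sin.neg
  have hZ0 : Continuous (Z0 y) := (hcos.mul hy0).sub (hsin.mul hy1)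
  have hZ1 : Continuous (Z1 y) := (hsin.mul hy0).add (hcos.mul hy1)
  have hP0 : Continuous (P0 y) :=
    ((hnsin.mul hy0).add (hcos.mul hq0)).sub ((hcos.mul hy1).add (hsin.mul hq1))
  have hP1 : Continuous (P1 y) :=
    ((hcos.mul hy0).add (hsin.mul hq0)).add ((hnsin.mul hy1).add (hcos.mul hq1))
  have hnormSq : ∀ f : ℝ → ℂ, Continuous f → Continuous fun t => Complex.normSq (f t) :=
    fun f hf => Complex.continuous_normSq.comp hf
  constructor
  · unfold Hr
    exact ((hnormSq _ (hP0.sub (hrrc.mul hZ0))).add (hnormSq _ (hP1.sub (hrrc.mul hZ1)))).add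
      (hfrac2.mul ((hnormSq _ hy0).add (hnormSq _ hy1)))
  · unfold Fc
    simp only [Fin.sum_univ_two, Matrix.mulVec, Matrix.cons_val', Matrix.cons_val_zero,
      Matrix.cons_val_one, Matrix.head_cons, Matrix.head_fin_const, Matrix.empty_val',
      Matrix.cons_val_fin_one, dotProduct, Fin.isValue, Matrix.of_apply]
    have hst0 : Continuous fun t => (starRingEnd ℂ) (y t 0) := Complex.continuous_conj.comp hy0
    have hst1 : Continuous fun t => (starRingEnd ℂ) (y t 1) := Complex.continuous_conj.comp hy1
    exact ((((ha0.neg).sub (continuous_const.mul ((continuous_const.mul hq0).add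
      (continuous_const.mul hq1)))).add (hfrac.mul hy0)).mul hst0).add
      ((((ha1.neg).sub (continuous_const.mul ((continuous_const.mul hq0).add
      (continuous_const.mul hq1)))).add (hfrac.mul hy1)).mul hst1)

end P14

open MeasureTheory

/-- for `δ > 1`, `e ∈ [0,1)` and `|ω| = 1`, the operator
`-(d²/dθ²)I₂ - 2J₂ d/dθ + δ I₂/(1 + e cos θ)` is strictly positive on `D̄₂(ω,2π)`. -/
theorem planar_operator_positive (δ e : ℝ) (hδ : 1 < δ) (he0 : 0 ≤ e) (he1 : e < 1)
    (ω : ℂ) (hω : ‖ω‖ = 1)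
    (y : ℝ → Fin 2 → ℂ) (hy : ContDiff ℝ 2 y)
    (hbc : y (2 * π) = ω • y 0)
    (hbc' : deriv y (2 * π) = ω • deriv y 0)
    (hne : ∃ θ ∈ Set.Icc (0:ℝ) (2 * π), y θ ≠ 0) :
    0 < (∫ θ in (0:ℝ)..(2 * π), ∑ i : Fin 2,
      (-(deriv (deriv y) θ i)
        - 2 * ((!![0, -1; 1, 0] : Matrix (Fin 2) (Fin 2) ℂ).mulVec (deriv y θ)) i
        + (δ / (1 + e * Real.cos θ) : ℝ) * y θ i)
          * (starRingEnd ℂ) (y θ i)).re := by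
  have h2π : (0:ℝ) < 2 * π := by positivity
  obtain ⟨θ₀, hθ₀, hyne⟩ := hne
  obtain ⟨hH, hFcC⟩ := P14.contHr δ e he0 he1 y hy
  have hFre : Continuous (fun t => (P14.Fc δ e y t).re) := Complex.continuous_re.comp hFcC
  have hupos : ∀ t : ℝ, 0 < 1 + e * Real.cos t := fun t => by
    nlinarith [Real.neg_one_le_cos t, Real.cos_le_one t]
  -- FTC
  have hderiv : ∀ t ∈ Set.uIcc (0:ℝ) (2*π),
      HasDerivAt (fun s => (P14.G e y s).re) ((P14.Fc δ e y t).re - P14.Hr δ e y t) t :=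
    fun t _ => P14.main_deriv δ e he0 he1 y hy t
  have hint : IntervalIntegrable (fun t => (P14.Fc δ e y t).re - P14.Hr δ e y t)
      volume 0 (2*π) := (hFre.sub hH).intervalIntegrable _ _
  have hftc := intervalIntegral.integral_eq_sub_of_hasDerivAt hderiv hint
  rw [P14.boundary e ω hω y hbc hbc', sub_self] at hftc
  have hsub : (∫ t in (0:ℝ)..(2*π), ((P14.Fc δ e y t).re - P14.Hr δ e y t))
      = (∫ t in (0:ℝ)..(2*π), (P14.Fc δ e y t).re) - ∫ t in (0:ℝ)..(2*π), P14.Hr δ e y t :=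
    intervalIntegral.integral_sub (hFre.intervalIntegrable _ _) (hH.intervalIntegrable _ _)
  have hEq : (∫ t in (0:ℝ)..(2*π), (P14.Fc δ e y t).re)
      = ∫ t in (0:ℝ)..(2*π), P14.Hr δ e y t := by
    rw [hftc] at hsub; linarith
  -- nonnegativity of Hr
  have hHnn : ∀ t, 0 ≤ P14.Hr δ e y t := fun t =>
    add_nonneg (add_nonneg (Complex.normSq_nonneg _) (Complex.normSq_nonneg _))
      (mul_nonneg (div_nonneg (by linarith) (le_of_lt (hupos t)))
        (add_nonneg (Complex.normSq_nonneg _) (Complex.normSq_nonneg _)))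
  -- positivity at θ₀
  have hH0 : 0 < P14.Hr δ e y θ₀ := by
    have hsum : 0 < Complex.normSq (y θ₀ 0) + Complex.normSq (y θ₀ 1) := by
      rcases eq_or_ne (y θ₀ 0) 0 with h0 | h0
      · have h1 : y θ₀ 1 ≠ 0 := by
          intro h1
          exact hyne (funext fun i => by fin_cases i <;> assumption)
        have := Complex.normSq_pos.mpr h1
        have := Complex.normSq_nonneg (y θ₀ 0)
        linarith
      · have := Complex.normSq_pos.mpr h0
        have := Complex.normSq_nonneg (y θ₀ 1)
        linarith
    have hpos3 : 0 < (δ - 1) / (1 + e * Real.cos θ₀) *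
        (Complex.normSq (y θ₀ 0) + Complex.normSq (y θ₀ 1)) :=
      mul_pos (div_pos (by linarith) (hupos θ₀)) hsum
    have := Complex.normSq_nonneg (P14.P0 y θ₀ - ((P14.rr e θ₀ : ℝ):ℂ) * P14.Z0 y θ₀)
    have := Complex.normSq_nonneg (P14.P1 y θ₀ - ((P14.rr e θ₀ : ℝ):ℂ) * P14.Z1 y θ₀)
    unfold P14.Hr
    linarith
  -- positivity of the integral of Hr
  have hpos : 0 < ∫ t in (0:ℝ)..(2*π), P14.Hr δ e y t := by
    rw [intervalIntegral.integral_pos_iff_support_of_nonneg_ae'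
      (Filter.Eventually.of_forall fun t => hHnn t) (hH.intervalIntegrable _ _)]
    refine ⟨h2π, ?_⟩
    have hUopen : IsOpen ({t : ℝ | 0 < P14.Hr δ e y t} ∩ Set.Ioo 0 (2*π)) :=
      (isOpen_lt continuous_const hH).inter isOpen_Ioo
    have hUne : ({t : ℝ | 0 < P14.Hr δ e y t} ∩ Set.Ioo 0 (2*π)).Nonempty := by
      have hcl : θ₀ ∈ closure (Set.Ioo (0:ℝ) (2*π)) := by
        rwa [closure_Ioo (ne_of_lt h2π)]
      obtain ⟨x, hx1, hx2⟩ := mem_closure_iff.mp hcl _ (isOpen_lt continuous_const hH) hH0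
      exact ⟨x, hx1, hx2⟩
    calc 0 < volume ({t : ℝ | 0 < P14.Hr δ e y t} ∩ Set.Ioo 0 (2*π)) :=
        hUopen.measure_pos volume hUne
    _ ≤ volume (Function.support (P14.Hr δ e y) ∩ Set.Ioc 0 (2*π)) :=
        measure_mono fun x hx => ⟨ne_of_gt hx.1, hx.2.1, le_of_lt hx.2.2⟩
  have hcomm := (Complex.reCLM : ℂ →L[ℝ] ℝ).intervalIntegral_comp_comm
    (μ := volume) (a := (0:ℝ)) (b := 2*π) (hFcC.intervalIntegrable _ _)
  show 0 < (∫ θ in (0:ℝ)..(2*π), P14.Fc δ e y θ).re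
  have hcomm' : (∫ t in (0:ℝ)..(2*π), (P14.Fc δ e y t).re)
      = (∫ θ in (0:ℝ)..(2*π), P14.Fc δ e y θ).re := hcomm
  rw [← hcomm', hEq]
  exact hpos
end
end
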